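/- arXiv:1812.03641 — 8 statements merged into one kernel-verified Lean document; each statement's English description precedes it below -/
import Mathlib

section
/- Let G be a finite group, K a normal subgroup of G, and x ∈ G an element whose order is coprime to |K|. Then the centralizer of xK in G/K equals the image of C_G(x)K/K, i.e., C_{G/K}(xK) = C_G(x)K/K. -/
open scoped Pointwise
open scoped commutatorElement

open Subgroup

lemma aux_pp {G : Type*} [Group G] [Finite G] (K : Subgroup G) [K.Normal]
    {p a : ℕ} (hp : p.Prime) (x : G) (hx : orderOf x = p ^ a)
    (hcop : Nat.Coprime (orderOf x) (Nat.card K))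
    (htop : K ⊔ Subgroup.zpowers x = ⊤)
    (y : G) (hyK : y * x⁻¹ ∈ K) (hyo : y ^ p ^ a = 1) :
    ∃ k ∈ K, y = k * x * k⁻¹ := by
  haveI : Fact p.Prime := ⟨hp⟩
  rcases Nat.eq_zero_or_pos a with rfl | ha
  · have hx1 : x = 1 := orderOf_eq_one_iff.mp (by simpa using hx)
    refine ⟨1, one_mem _, ?_⟩
    simpa [hx1] using hyo
  set Z := Subgroup.zpowers x with hZ
  have hcardZ : Nat.card Z = p ^ a := by rw [Nat.card_zpowers, hx]
  have hpK : Nat.Coprime p (Nat.card K) :=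
    Nat.Coprime.coprime_dvd_left (dvd_pow_self p ha.ne') (hx ▸ hcop)
  -- Z is a p-group, take Sylow P ⊇ Z
  have hZp : IsPGroup p Z := IsPGroup.of_card hcardZ
  obtain ⟨P, hZP⟩ := hZp.exists_le_sylow
  -- zpowers y is a p-group, take Sylow Q ⊇ it
  have hyp : IsPGroup p (Subgroup.zpowers y) := by
    obtain ⟨b, -, hb⟩ := (Nat.dvd_prime_pow hp).mp (orderOf_dvd_of_pow_eq_one hyo)
    exact IsPGroup.of_card (by rw [Nat.card_zpowers, hb])
  obtain ⟨Q, hyQ⟩ := hyp.exists_le_sylow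
  -- Any Sylow p-subgroup has card dividing p ^ a, so P = Z
  have key : ∀ R : Sylow p G, Nat.card R ∣ p ^ a := by
    intro R
    obtain ⟨m, hm⟩ := IsPGroup.iff_card.mp R.2
    have hinf : (R : Subgroup G) ⊓ K = ⊥ :=
      inf_eq_bot_of_coprime (by rw [hm]; exact hpK.pow_left m)
    have hinj : Function.Injective ((QuotientGroup.mk' K).comp (R : Subgroup G).subtype) := by
      rw [← MonoidHom.ker_eq_bot_iff, eq_bot_iff]
      intro g hg
      have : (g : G) ∈ (R : Subgroup G) ⊓ K := ⟨g.2, (QuotientGroup.eq_one_iff _).mp hg⟩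
      rw [hinf] at this
      rw [Subgroup.mem_bot]
      exact Subtype.ext (Subgroup.mem_bot.mp this)
    have h1 : Nat.card R ∣ Nat.card (G ⧸ K) := card_dvd_of_injective _ hinj
    have hsurj : Function.Surjective ((QuotientGroup.mk' K).comp Z.subtype) := by
      intro q
      obtain ⟨g, rfl⟩ := QuotientGroup.mk'_surjective K q
      have hg : g ∈ K ⊔ Z := htop ▸ mem_top g
      rw [sup_comm, ← SetLike.mem_coe, Subgroup.mul_normal] at hg
      obtain ⟨z, hz, k, hk, rfl⟩ := hg
      refine ⟨⟨z, hz⟩, ?_⟩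
      show (QuotientGroup.mk z : G ⧸ K) = QuotientGroup.mk (z * k)
      exact (QuotientGroup.mk_mul_of_mem z hk).symm
    have h2 : Nat.card (G ⧸ K) ∣ Nat.card Z := card_dvd_of_surjective _ hsurj
    exact h1.trans (h2.trans (hcardZ ▸ dvd_refl _))
  have hPZ : (P : Subgroup G) = Z := by
    refine (Subgroup.eq_of_le_of_card_ge hZP ?_).symm
    calc Nat.card P ≤ p ^ a := Nat.le_of_dvd (pow_pos hp.pos a) (key P)
    _ = Nat.card Z := hcardZ.symm
  obtain ⟨g, hgPQ⟩ := MulAction.exists_smul_eq G P Q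
  have hyP : y ∈ MulAut.conj g • (P : Subgroup G) := by
    have h0 : y ∈ (Q : Subgroup G) := hyQ (Subgroup.mem_zpowers y)
    rw [← hgPQ] at h0
    rw [← Sylow.coe_subgroup_smul]
    exact h0
  rw [hPZ, Subgroup.mem_pointwise_smul_iff_inv_smul_mem] at hyP
  have hyP' : g⁻¹ * y * g ∈ Z := by
    have := hyP
    simpa [MulAut.smul_def, mul_assoc] using this
  obtain ⟨j, hj⟩ := hyP'
  -- write g = k * x^i
  clear hyP
  have hg : g ∈ K ⊔ Z := htop ▸ mem_top g
  rw [← SetLike.mem_coe, Subgroup.normal_mul] at hg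
  obtain ⟨k, hk, z, hz, rfl⟩ := hg
  obtain ⟨i, rfl⟩ := hz
  -- y = k * x^j * k⁻¹
  have hj' : x ^ j = (k * x ^ i)⁻¹ * y * (k * x ^ i) := hj
  have hyform : y = k * x ^ j * k⁻¹ := by
    have h5 : (k * x ^ i) * x ^ j * (k * x ^ i)⁻¹ = y := by
      rw [hj']; group
    rw [← h5]; group
  -- x ^ j = x
  have hxj : x ^ j = x := by
    have h1 : x ^ j * x⁻¹ ∈ K := by
      have e : x ^ j * x⁻¹ = k⁻¹ * (y * x⁻¹) * (x * k * x⁻¹) := by rw [hyform]; group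
      rw [e]
      exact mul_mem (mul_mem (inv_mem hk) hyK)
        ((‹K.Normal›).conj_mem k hk x)
    have h3 : x ^ j * x⁻¹ ∈ Z ⊓ K :=
      ⟨Z.mul_mem (Z.zpow_mem (Subgroup.mem_zpowers x) j)
        (Z.inv_mem (Subgroup.mem_zpowers x)), h1⟩
    rw [inf_eq_bot_of_coprime (by rw [Nat.card_zpowers]; exact hcop)] at h3
    have := Subgroup.mem_bot.mp h3
    rw [mul_inv_eq_one] at this
    exact this
  exact ⟨k, hk, by rw [hyform, hxj]⟩

lemma aux_pp' {G : Type*} [Group G] [Finite G] (K : Subgroup G) [K.Normal]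
    {p a : ℕ} (hp : p.Prime) (x : G) (hx : orderOf x = p ^ a)
    (hcop : Nat.Coprime (orderOf x) (Nat.card K))
    (g : G) (hg : g * x * g⁻¹ * x⁻¹ ∈ K) :
    ∃ k ∈ K, (k⁻¹ * g) * x * (k⁻¹ * g)⁻¹ = x := by
  set y := g * x * g⁻¹ with hy
  set L := K ⊔ Subgroup.zpowers x with hL
  have hxL : x ∈ L := (le_sup_right : Subgroup.zpowers x ≤ L) (Subgroup.mem_zpowers x)
  have hKL : K ≤ L := le_sup_left
  have hyxK : y * x⁻¹ ∈ K := hg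
  have hyL : y ∈ L := by
    have : y = (y * x⁻¹) * x := by group
    rw [this]
    exact mul_mem (hKL hyxK) hxL
  set K' : Subgroup L := K.subgroupOf L with hK'
  have hnorm : K'.Normal := Subgroup.normal_subgroupOf
  set x' : L := ⟨x, hxL⟩ with hx'
  have hox : orderOf x' = p ^ a := by
    rw [← hx]
    exact Subgroup.orderOf_mk x hxL
  have hcardK' : Nat.card K' = Nat.card K :=
    Nat.card_congr (Subgroup.subgroupOfEquivOfLe hKL).toEquiv
  have hcop' : Nat.Coprime (orderOf x') (Nat.card K') := by
    rw [hox, hcardK', ← hx]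
    exact hcop
  have htop' : K' ⊔ Subgroup.zpowers x' = ⊤ := by
    rw [eq_top_iff]
    rintro ⟨z, hz⟩ -
    have hz' : z ∈ K ⊔ Subgroup.zpowers x := hz
    rw [← SetLike.mem_coe, Subgroup.normal_mul] at hz'
    obtain ⟨k, hk, w, hw, rfl⟩ := hz'
    obtain ⟨i, rfl⟩ := hw
    have hkL : k ∈ L := hKL hk
    have : (⟨k * x ^ i, hz⟩ : L) = ⟨k, hkL⟩ * x' ^ i := by
      ext
      simp
      rfl
    rw [this]
    exact mul_mem ((le_sup_left : K' ≤ K' ⊔ Subgroup.zpowers x') (by exact hk))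
      ((le_sup_right : Subgroup.zpowers x' ≤ K' ⊔ Subgroup.zpowers x')
        ((Subgroup.zpowers x').zpow_mem (Subgroup.mem_zpowers x') i))
  set y' : L := ⟨y, hyL⟩ with hy'
  have hyK' : y' * x'⁻¹ ∈ K' := by
    show y * x⁻¹ ∈ K
    exact hyxK
  have hyo : y' ^ p ^ a = 1 := by
    ext
    show y ^ p ^ a = 1
    rw [hy, conj_pow, ← hx, pow_orderOf_eq_one, mul_one, mul_inv_cancel]
  obtain ⟨k', hk', hyk⟩ := aux_pp K' hp x' hox hcop' htop' y' hyK' hyo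
  refine ⟨(k' : G), hk', ?_⟩
  have hcoe : y = (k' : G) * x * (k' : G)⁻¹ := by
    have := congrArg (Subtype.val) hyk
    simpa using this
  have : (k' : G)⁻¹ * y * (k' : G) = x := by rw [hcoe]; group
  calc ((k' : G)⁻¹ * g) * x * ((k' : G)⁻¹ * g)⁻¹ = (k' : G)⁻¹ * y * (k' : G) := by
        rw [hy]; group
  _ = x := this

lemma aux_key (n : ℕ) : ∀ (G : Type u) (_ : Group G) (_ : Finite G) (K : Subgroup G)
    (_ : K.Normal) (x g : G), orderOf x = n → Nat.Coprime (orderOf x) (Nat.card K) →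
    g * x * g⁻¹ * x⁻¹ ∈ K → ∃ k ∈ K, k⁻¹ * g ∈ Subgroup.centralizer {x} := by
  induction n using Nat.strong_induction_on with
  | _ n ih =>
  intro G _ _ K _ x g hn hcop hg
  rcases eq_or_ne n 1 with rfl | hn1
  · have hx1 : x = 1 := orderOf_eq_one_iff.mp hn
    exact ⟨1, one_mem _, by
      rw [Subgroup.mem_centralizer_iff]
      rintro h ⟨rfl⟩
      rw [hx1]; group⟩
  have hn0 : n ≠ 0 := by rw [← hn]; exact (orderOf_pos x).ne'
  set p := n.minFac with hp'
  have hp : p.Prime := Nat.minFac_prime hn1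
  set a := n.factorization p with ha'
  set pa := p ^ a with hpa'
  set n' := n / pa with hn''
  have hpa_dvd : pa ∣ n := Nat.ordProj_dvd n p
  have hmul : pa * n' = n := Nat.ordProj_mul_ordCompl_eq_self n p
  have hcop_pn : Nat.Coprime pa n' := Nat.Coprime.pow_left a (Nat.coprime_ordCompl hp hn0)
  have ha1 : 1 ≤ a := (Nat.Prime.factorization_pos_of_dvd hp hn0 n.minFac_dvd)
  have hpa1 : 1 < pa := by
    calc 1 < p := hp.one_lt
    _ ≤ p ^ a := Nat.le_self_pow (by omega) p
  have hn'_lt : n' < n := by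
    rw [← hmul]
    exact lt_mul_of_one_lt_left (Nat.pos_of_ne_zero (by
      intro h0; rw [← hmul, h0, mul_zero] at hn0; exact hn0 rfl)) hpa1
  set xp := x ^ n' with hxp'
  set xq := x ^ pa with hxq'
  have hn'_dvd : n' ∣ n := ⟨pa, by rw [← hmul, mul_comm]⟩
  have hn'_pos : 0 < n' := Nat.pos_of_ne_zero (by
    intro h0; rw [h0, mul_zero] at hmul; exact hn0 hmul.symm)
  have hoxp : orderOf xp = pa := by
    rw [hxp', orderOf_pow, hn, Nat.gcd_eq_right hn'_dvd, ← hmul,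
      Nat.mul_div_cancel _ hn'_pos]
  have hoxq : orderOf xq = n' := by
    rw [hxq', orderOf_pow, hn, Nat.gcd_eq_right hpa_dvd, ← hmul,
      Nat.mul_div_cancel_left _ (by omega : 0 < pa)]
  set π := QuotientGroup.mk' K with hπ'
  have hcomm : Commute (π g) (π x) := by
    rw [← commutatorElement_eq_one_iff_commute]
    have : π ⁅g, x⁆ = 1 := (QuotientGroup.eq_one_iff _).mpr hg
    rwa [map_commutatorElement] at this
  have hKpow : ∀ m : ℕ, g * x ^ m * g⁻¹ * (x ^ m)⁻¹ ∈ K := by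
    intro m
    have h1 : π ⁅g, x ^ m⁆ = 1 := by
      rw [map_commutatorElement, map_pow]
      exact commutatorElement_eq_one_iff_commute.mpr (hcomm.pow_right m)
    exact (QuotientGroup.eq_one_iff _).mp h1
  have hcop_p : Nat.Coprime (orderOf xp) (Nat.card K) := by
    rw [hoxp]
    exact Nat.Coprime.coprime_dvd_left hpa_dvd (hn ▸ hcop)
  obtain ⟨k, hk, hkc⟩ := aux_pp' K hp xp hoxp hcop_p g (hKpow n')
  set h := k⁻¹ * g with hh'
  set C := Subgroup.centralizer ({xp} : Set G) with hC'
  have hhC : h ∈ C := by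
    rw [hC', Subgroup.mem_centralizer_iff]
    intro b hb
    rw [Set.mem_singleton_iff] at hb
    subst hb
    exact (mul_inv_eq_iff_eq_mul.mp hkc).symm
  have hxqC : xq ∈ C := by
    rw [hC', Subgroup.mem_centralizer_iff]
    intro b hb
    rw [Set.mem_singleton_iff] at hb
    subst hb
    exact pow_mul_comm x n' pa
  set K₁ := K.subgroupOf C with hK₁'
  haveI : K₁.Normal := Subgroup.normal_subgroupOf
  set x₁ : C := ⟨xq, hxqC⟩ with hx₁'
  set g₁ : C := ⟨h, hhC⟩ with hg₁'
  have hox₁ : orderOf x₁ = n' := by rw [hx₁', Subgroup.orderOf_mk, hoxq]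
  have hcard₁ : Nat.card K₁ ∣ Nat.card K := by
    have he : Nat.card K₁ = Nat.card (K₁.map C.subtype) :=
      Nat.card_congr (Subgroup.equivMapOfInjective K₁ C.subtype C.subtype_injective).toEquiv
    rw [he, hK₁', Subgroup.subgroupOf_map_subtype]
    exact Subgroup.card_dvd_of_le inf_le_left
  have hcop₁ : Nat.Coprime (orderOf x₁) (Nat.card K₁) := by
    rw [hox₁]
    exact Nat.Coprime.coprime_dvd_right hcard₁
      (Nat.Coprime.coprime_dvd_left hn'_dvd (hn ▸ hcop))
  have hπh : π h = π g := by
    have hπk : π k = 1 := (QuotientGroup.eq_one_iff k).mpr hk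
    rw [hh', map_mul, map_inv, hπk, inv_one, one_mul]
  have hg₁K : g₁ * x₁ * g₁⁻¹ * x₁⁻¹ ∈ K₁ := by
    show h * xq * h⁻¹ * xq⁻¹ ∈ K
    have h1 : π ⁅h, x ^ pa⁆ = 1 := by
      rw [map_commutatorElement, map_pow, hπh]
      exact commutatorElement_eq_one_iff_commute.mpr (hcomm.pow_right pa)
    exact (QuotientGroup.eq_one_iff _).mp h1
  obtain ⟨k₁, hk₁, hc₁⟩ := ih n' hn'_lt C inferInstance inferInstance K₁ inferInstance x₁ g₁ hox₁ hcop₁ hg₁K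
  have hk₁K : (k₁ : G) ∈ K := hk₁
  refine ⟨k * (k₁ : G), mul_mem hk hk₁K, ?_⟩
  set c : C := k₁⁻¹ * g₁ with hc'
  have heq : (k * (k₁ : G))⁻¹ * g = ((c : C) : G) := by
    rw [hc']
    show (k * (k₁ : G))⁻¹ * g = (k₁ : G)⁻¹ * h
    rw [hh']
    group
  have hcxq : Commute ((c : C) : G) xq := by
    have h2 : x₁ * c = c * x₁ := Subgroup.mem_centralizer_iff.mp hc₁ x₁ rfl
    have h3 := congrArg (Subtype.val) h2
    exact (h3 : xq * ((c : C) : G) = _).symm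
  have hcxp : Commute ((c : C) : G) xp := by
    have := Subgroup.mem_centralizer_iff.mp c.2 xp rfl
    exact this.symm
  have hAB : (pa : ℤ) * (Nat.gcdA pa n') + (n' : ℤ) * (Nat.gcdB pa n') = 1 := by
    have hb := Nat.gcd_eq_gcd_ab pa n'
    rw [Nat.Coprime.gcd_eq_one hcop_pn] at hb
    exact_mod_cast hb.symm
  set A := Nat.gcdA pa n'
  set B := Nat.gcdB pa n'
  have hxrep : x = xq ^ A * xp ^ B := by
    calc x = x ^ ((pa : ℤ) * A + (n' : ℤ) * B) := by rw [hAB, zpow_one]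
    _ = xq ^ A * xp ^ B := by
        rw [zpow_add, zpow_mul, zpow_mul, zpow_natCast, zpow_natCast]
  have hcx : Commute ((c : C) : G) x := by
    rw [hxrep]
    exact (hcxq.zpow_right A).mul_right (hcxp.zpow_right B)
  rw [Subgroup.mem_centralizer_iff]
  intro b hb
  rw [Set.mem_singleton_iff] at hb
  subst hb
  rw [heq]
  exact hcx.eq.symm


theorem stmt_3 (G : Type*) [Group G] [Fintype G] (K : Subgroup G) [K.Normal] (x : G)
    (h : Nat.Coprime (orderOf x) (Nat.card K)) :
    Subgroup.centralizer {(x : G ⧸ K)} =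
      (Subgroup.centralizer {x}).map (QuotientGroup.mk' K) := by
  apply le_antisymm
  · intro q hq
    obtain ⟨g, rfl⟩ := QuotientGroup.mk'_surjective K q
    have hgx : g * x * g⁻¹ * x⁻¹ ∈ K := by
      have hcomm : (x : G ⧸ K) * QuotientGroup.mk' K g = QuotientGroup.mk' K g * x :=
        Subgroup.mem_centralizer_iff.mp hq _ rfl
      have h1 : QuotientGroup.mk' K ⁅g, x⁆ = 1 := by
        rw [map_commutatorElement]
        exact commutatorElement_eq_one_iff_commute.mpr hcomm.symm
      have h2 : ⁅g, x⁆ ∈ K := (QuotientGroup.eq_one_iff _).mp h1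
      rwa [commutatorElement_def] at h2
    obtain ⟨k, hk, hc⟩ := aux_key (orderOf x) G inferInstance inferInstance K
      inferInstance x g rfl h hgx
    refine ⟨k⁻¹ * g, hc, ?_⟩
    show QuotientGroup.mk (k⁻¹ * g) = QuotientGroup.mk g
    have h1 : (QuotientGroup.mk k⁻¹ : G ⧸ K) = 1 := (QuotientGroup.eq_one_iff _).mpr (inv_mem hk)
    rw [QuotientGroup.mk_mul, h1, one_mul]
  · rintro q ⟨g, hg, rfl⟩
    rw [Subgroup.mem_centralizer_iff]
    intro b hb
    rw [Set.mem_singleton_iff] at hb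
    subst hb
    have hcx : x * g = g * x := Subgroup.mem_centralizer_iff.mp hg x rfl
    show (QuotientGroup.mk x : G ⧸ K) * QuotientGroup.mk g = QuotientGroup.mk g * QuotientGroup.mk x
    rw [← QuotientGroup.mk_mul, ← QuotientGroup.mk_mul, hcx]
end

section
/- Let G be a finite group and g ∈ G. If every conjugacy class of G contains an element h such that g ∈ C_G(h), then g lies in the center of G. -/
open Finset

theorem stmt_6 (G : Type*) [Group G] [Fintype G] (g : G)
    (h : ∀ x : G, ∃ h : G, IsConj x h ∧ g * h = h * g) :
    g ∈ Subgroup.center G := by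
  classical
  -- the centralizer of g as a finset
  set Cf : Finset G := univ.filter (fun c => g * c = c * g) with hCf
  have memC : ∀ c : G, c ∈ Cf ↔ g * c = c * g := by
    intro c; simp [hCf]
  have hone : (1 : G) ∈ Cf := by rw [memC]; group
  have hmul : ∀ a b : G, a ∈ Cf → b ∈ Cf → a * b ∈ Cf := by
    intro a b ha hb
    rw [memC] at *
    rw [← mul_assoc, ha, mul_assoc, hb, mul_assoc]
  have hinv : ∀ a : G, a ∈ Cf → a⁻¹ ∈ Cf := by
    intro a ha
    rw [memC] at *
    have := congrArg (fun t => a⁻¹ * t * a⁻¹) ha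
    simpa [mul_assoc] using this.symm
  -- conjugates of Cf
  set ψ : G → Finset G := fun a => Cf.image (fun t => a * t * a⁻¹) with hψ
  have hconjinj : ∀ a : G, Function.Injective (fun t : G => a * t * a⁻¹) := by
    intro a t₁ t₂ ht
    simpa using mul_left_cancel (mul_right_cancel ht)
  have hcard : ∀ a : G, (ψ a).card = Cf.card := fun a =>
    Finset.card_image_of_injective _ (hconjinj a)
  have honemem : ∀ a : G, (1 : G) ∈ ψ a := by
    intro a
    refine Finset.mem_image.2 ⟨1, hone, by group⟩
  -- conjugation by an element of Cf fixes Cf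
  have hfix : ∀ c : G, c ∈ Cf → Cf.image (fun t => c * t * c⁻¹) = Cf := by
    intro c hc
    apply Finset.eq_of_subset_of_card_le
    · intro x hx
      obtain ⟨t, ht, rfl⟩ := Finset.mem_image.1 hx
      exact hmul _ _ (hmul _ _ hc ht) (hinv _ hc)
    · rw [Finset.card_image_of_injective _ (hconjinj c)]
  -- ψ is constant on right translates by Cf
  have hpsi_mul : ∀ a c : G, c ∈ Cf → ψ (a * c) = ψ a := by
    intro a c hc
    have : ψ (a * c) = (Cf.image (fun t => c * t * c⁻¹)).image (fun t => a * t * a⁻¹) := by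
      rw [Finset.image_image]
      apply Finset.image_congr
      intro t _
      simp only [Function.comp]
      group
    rw [this, hfix c hc]
  -- the set of conjugates
  set S : Finset (Finset G) := univ.image ψ with hS
  set n := Fintype.card G with hn
  set m := Cf.card with hm
  have hm1 : 1 ≤ m := Finset.card_pos.2 ⟨1, hone⟩
  -- fiber count : S.card * m ≤ n
  have hfib : ∀ K ∈ S, m ≤ (univ.filter (fun a => ψ a = K)).card := by
    intro K hK
    obtain ⟨a, _, rfl⟩ := Finset.mem_image.1 hK
    have hsub : Cf.image (fun c => a * c) ⊆ univ.filter (fun b => ψ b = ψ a) := by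
      intro x hx
      obtain ⟨c, hc, rfl⟩ := Finset.mem_image.1 hx
      simp only [Finset.mem_filter, Finset.mem_univ, true_and]
      exact hpsi_mul a c hc
    calc m = (Cf.image (fun c => a * c)).card :=
            (Finset.card_image_of_injective _ (mul_right_injective a)).symm
      _ ≤ _ := Finset.card_le_card hsub
  have hcount : S.card * m ≤ n := by
    have := Finset.card_eq_sum_card_fiberwise
      (fun a (_ : a ∈ (univ : Finset G)) => Finset.mem_image_of_mem ψ (mem_univ a))
    rw [Finset.card_univ] at this
    calc S.card * m = ∑ _K ∈ S, m := by rw [Finset.sum_const, smul_eq_mul, mul_comm]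
      _ ≤ ∑ K ∈ S, (univ.filter (fun a => ψ a = K)).card := Finset.sum_le_sum hfib
      _ = n := this.symm
  -- covering : every x lies in some ψ a
  have hcover : ∀ x : G, ∃ a : G, x ∈ ψ a := by
    intro x
    obtain ⟨y, hxy, hgy⟩ := h x
    rw [isConj_iff] at hxy
    obtain ⟨c, hc⟩ := hxy
    refine ⟨c⁻¹, Finset.mem_image.2 ⟨y, (memC y).2 hgy, ?_⟩⟩
    rw [← hc]; group
  -- union bound : n - 1 ≤ S.card * (m - 1)
  have hub : n - 1 ≤ S.card * (m - 1) := by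
    have hsub : univ.erase (1 : G) ⊆ S.biUnion (fun K => K.erase 1) := by
      intro x hx
      obtain ⟨a, ha⟩ := hcover x
      refine Finset.mem_biUnion.2 ⟨ψ a, Finset.mem_image_of_mem ψ (mem_univ a), ?_⟩
      exact Finset.mem_erase.2 ⟨(Finset.mem_erase.1 hx).1, ha⟩
    calc n - 1 = (univ.erase (1 : G)).card := by
          rw [Finset.card_erase_of_mem (mem_univ 1), Finset.card_univ]
      _ ≤ (S.biUnion (fun K => K.erase 1)).card := Finset.card_le_card hsub
      _ ≤ ∑ K ∈ S, (K.erase 1).card := Finset.card_biUnion_le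
      _ ≤ ∑ _K ∈ S, (m - 1) := by
          refine Finset.sum_le_sum ?_
          intro K hK
          obtain ⟨a, _, rfl⟩ := Finset.mem_image.1 hK
          rw [Finset.card_erase_of_mem (honemem a), hcard a]
      _ = S.card * (m - 1) := by rw [Finset.sum_const, smul_eq_mul]
  -- conclude S.card ≤ 1
  have hSpos : 1 ≤ S.card := Finset.card_pos.2 ⟨ψ 1, Finset.mem_image_of_mem ψ (mem_univ 1)⟩
  have hnpos : 1 ≤ n := Fintype.card_pos
  have hkey : S.card * (m - 1) + S.card = S.card * m := by
    have : ∀ s mm : ℕ, 1 ≤ mm → s * (mm - 1) + s = s * mm := by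
      intro s mm hmm
      obtain ⟨m', rfl⟩ := Nat.exists_eq_add_of_le hmm
      simp [Nat.mul_add, Nat.add_comm]
    exact this _ _ hm1
  have hS1 : S.card = 1 := by omega
  -- so ψ 1 is the unique conjugate, and it covers G
  have hpsi1 : ψ 1 = Cf := by
    rw [hψ]
    simp
  have hall : ∀ a : G, ψ a = Cf := by
    intro a
    have h1 : ψ a ∈ S := Finset.mem_image_of_mem ψ (mem_univ a)
    have h2 : ψ 1 ∈ S := Finset.mem_image_of_mem ψ (mem_univ 1)
    rw [Finset.card_eq_one] at hS1
    obtain ⟨K, hK⟩ := hS1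
    rw [hK, Finset.mem_singleton] at h1 h2
    rw [h1, ← h2, hpsi1]
  rw [Subgroup.mem_center_iff]
  intro x
  obtain ⟨a, ha⟩ := hcover x
  rw [hall a, memC] at ha
  exact ha.symm
end

section
/- Let p be a prime and G a finite group satisfying condition R(p): there exists an integer α > 0 such that for every a ∈ G, the p-part of the index |G : C_G(a)| is either 1 or p^α. Let N be a normal subgroup of G whose order has the same p-part as |G| (i.e., |N|_p = |G|_p). Then N also satisfies R(p): for every x ∈ N, the p-part of |N : C_N(x)| is either 1 or p^α. -/
/-- The `p`-part of a natural number: the largest power of `p` dividing it. -/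
def pPart (p n : ℕ) : ℕ := p ^ (n.factorization p)

private lemma card_subgroupOf_aux {G : Type*} [Group G] (H K : Subgroup G) :
    Nat.card (H.subgroupOf K) = Nat.card (H ⊓ K : Subgroup G) := by
  rw [← Subgroup.inf_subgroupOf_right]
  exact Nat.card_congr (Subgroup.subgroupOfEquivOfLe inf_le_right).toEquiv

theorem stmt_7 (G : Type*) [Group G] [Fintype G] (p : ℕ) (hp : p.Prime)
    (α : ℕ) (hα : 0 < α)
    (hR : ∀ a : G, pPart p (Subgroup.centralizer {a}).index ∈ ({1, p ^ α} : Set ℕ))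
    (N : Subgroup G) [N.Normal]
    (hN : pPart p (Nat.card N) = pPart p (Nat.card G)) :
    ∀ x : N, pPart p (Subgroup.centralizer {x}).index ∈ ({1, p ^ α} : Set ℕ) := by
  intro x
  set cG := Subgroup.centralizer {(x : G)} with hcG
  set cN := Subgroup.centralizer ({x} : Set N) with hcN
  -- cN is cG pulled back to N
  have hsub : cN = cG.subgroupOf N := by
    ext y
    simp only [hcN, hcG, Subgroup.mem_subgroupOf, Subgroup.mem_centralizer_iff,
      Set.mem_singleton_iff, forall_eq]
    constructor
    · intro h
      exact_mod_cast congrArg (Subtype.val) h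
    · intro h
      exact Subtype.ext h
  -- nonzero facts
  have hG0 : Nat.card G ≠ 0 := Nat.card_pos.ne'
  have hN0 : Nat.card N ≠ 0 := Nat.card_pos.ne'
  have hcG0 : Nat.card cG ≠ 0 := Nat.card_pos.ne'
  have hcN0 : Nat.card cN ≠ 0 := Nat.card_pos.ne'
  have hinf0 : Nat.card (N ⊓ cG : Subgroup G) ≠ 0 := Nat.card_pos.ne'
  have hidxG0 : cG.index ≠ 0 := Subgroup.index_ne_zero_of_finite
  have hidxN0 : cN.index ≠ 0 := Subgroup.index_ne_zero_of_finite
  have hNidx0 : N.index ≠ 0 := Subgroup.index_ne_zero_of_finite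
  have hrel0 : N.relIndex cG ≠ 0 := by
    have := Subgroup.relIndex_dvd_index_of_normal N cG
    intro h
    rw [h] at this
    exact hNidx0 (Nat.eq_zero_of_zero_dvd this)
  -- valuation equalities
  have hNG : (Nat.card N).factorization p = (Nat.card G).factorization p := by
    have := hN
    unfold pPart at this
    exact Nat.pow_right_injective hp.two_le this
  have e1 : Nat.card cN * cN.index = Nat.card N := Subgroup.card_mul_index cN
  have e2 : Nat.card cG * cG.index = Nat.card G := Subgroup.card_mul_index cG
  have e3 : Nat.card cN = Nat.card (N ⊓ cG : Subgroup G) := by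
    rw [hsub, card_subgroupOf_aux, inf_comm]
  have e4 : Nat.card (N ⊓ cG : Subgroup G) * N.relIndex cG = Nat.card cG := by
    have := Subgroup.card_mul_index (N.subgroupOf cG)
    rwa [card_subgroupOf_aux] at this
  have e5 : (N.relIndex cG).factorization p = 0 := by
    -- N.relindex cG divides N.index, whose p-valuation is 0
    have hdvd : N.relIndex cG ∣ N.index := Subgroup.relIndex_dvd_index_of_normal N cG
    have eNi : Nat.card N * N.index = Nat.card G := Subgroup.card_mul_index N
    have h1 : (Nat.card N).factorization p + N.index.factorization p
        = (Nat.card G).factorization p := by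
      rw [← eNi, Nat.factorization_mul hN0 hNidx0]; rfl
    have hNi0 : N.index.factorization p = 0 := by omega
    have hle := (Nat.factorization_le_iff_dvd hrel0 hNidx0).mpr hdvd p
    simpa [hNi0] using Nat.le_antisymm (by simpa [hNi0] using hle) (Nat.zero_le _)
  have v1 : (Nat.card cN).factorization p + cN.index.factorization p
      = (Nat.card N).factorization p := by
    rw [← e1, Nat.factorization_mul hcN0 hidxN0]; rfl
  have v2 : (Nat.card cG).factorization p + cG.index.factorization p
      = (Nat.card G).factorization p := by
    rw [← e2, Nat.factorization_mul hcG0 hidxG0]; rfl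
  have v4 : (Nat.card (N ⊓ cG : Subgroup G)).factorization p
      + (N.relIndex cG).factorization p = (Nat.card cG).factorization p := by
    rw [← e4, Nat.factorization_mul hinf0 hrel0]; rfl
  have v3 : (Nat.card cN).factorization p
      = (Nat.card (N ⊓ cG : Subgroup G)).factorization p := by rw [e3]
  have key : cN.index.factorization p = cG.index.factorization p := by omega
  have := hR (x : G)
  unfold pPart at this ⊢
  rw [key]
  exact this
end

section
/- Let p be a prime and G a finite group. If every p'-element of G (element of order coprime to p) has conjugacy class size coprime to p, then G has a normal p-complement whose product with a Sylow p-subgroup gives a direct product decomposition; that is, a Sylow p-subgroup of G is a direct factor of G. -/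
open Subgroup Finset

section Aux

variable {G : Type*} [Group G] [Fintype G] {p : ℕ} [hp : Fact p.Prime]

lemma my_decomp' (g : G) : ∃ u y : G, u * y = g ∧ Commute u y ∧
    (∃ i, orderOf u = p ^ i) ∧ ¬ p ∣ orderOf y := by
  by_cases hpg : p ∣ orderOf g
  case neg =>
    exact ⟨1, g, one_mul g, Commute.one_left g, ⟨0, by simp⟩, hpg⟩
  case pos =>
    set n₀ := orderOf g with hn₀
    have hn0 : n₀ ≠ 0 := (orderOf_pos g).ne'
    set α := n₀.factorization p with hα
    set t := ordCompl[p] n₀ with ht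
    have hprod : p ^ α * t = n₀ := Nat.ordProj_mul_ordCompl_eq_self n₀ p
    have hco : Nat.Coprime (p ^ α) t := (Nat.coprime_ordCompl hp.out hn0).pow_left _
    obtain ⟨s, hs1, hs0⟩ := Nat.chineseRemainder hco 1 0
    have hts : t ∣ s := (Nat.modEq_zero_iff_dvd).mp hs0
    refine ⟨g ^ s, (g ^ s)⁻¹ * g, by group, ?_, ?_, ?_⟩
    · have c1 : Commute (g ^ s) g := (Commute.refl g).pow_left s
      exact ((Commute.refl (g ^ s)).inv_right).mul_right c1
    · have : (g ^ s) ^ (p ^ α) = 1 := by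
        rw [← pow_mul]
        apply orderOf_dvd_iff_pow_eq_one.mp
        rw [← hn₀, ← hprod, mul_comm s]
        exact mul_dvd_mul_left _ hts
      obtain ⟨i, _, hi⟩ := (Nat.dvd_prime_pow hp.out).mp (orderOf_dvd_of_pow_eq_one this)
      exact ⟨i, hi⟩
    · have c1 : Commute ((g ^ s)⁻¹) g := ((Commute.refl g).pow_left s).inv_left
      have hpow : ((g ^ s)⁻¹ * g) ^ t = 1 := by
        rw [c1.mul_pow, inv_pow, ← pow_mul, inv_mul_eq_one]
        apply (pow_eq_pow_iff_modEq).mpr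
        rw [← hn₀, ← hprod]
        calc s * t ≡ 1 * t [MOD p ^ α * t] := hs1.mul_right' t
        _ = t := one_mul t
      have hdvd : orderOf ((g ^ s)⁻¹ * g) ∣ t := orderOf_dvd_of_pow_eq_one hpow
      exact fun hc => Nat.not_dvd_ordCompl hp.out hn0 (hc.trans hdvd)

lemma my_sylow_le' (C : Subgroup G) (hC : Nat.Coprime C.index p)
    {u : G} (hu : u ∈ C) (hup : ∃ i, orderOf u = p ^ i) :
    ∃ Q : Sylow p G, (Q : Subgroup G) ≤ C ∧ u ∈ (Q : Subgroup G) := by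
  obtain ⟨i, hi⟩ := hup
  set u' : C := ⟨u, hu⟩ with hu'
  have hou : orderOf u' = p ^ i := by
    rw [← hi]; exact (orderOf_coe u').symm
  have hPG : IsPGroup p (Subgroup.zpowers u') :=
    IsPGroup.of_card (by rw [Nat.card_zpowers, hou])
  obtain ⟨R, hR⟩ := hPG.exists_le_sylow
  have hmap : IsPGroup p ((R : Subgroup C).map C.subtype) := R.2.map _
  obtain ⟨Q, hQ⟩ := hmap.exists_le_sylow
  have hfact : (Nat.card C).factorization p = (Nat.card G).factorization p := by
    have hprod : Nat.card C * C.index = Nat.card G := C.card_mul_index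
    have hC0 : Nat.card C ≠ 0 := Nat.card_pos.ne'
    have hI0 : C.index ≠ 0 := Subgroup.index_ne_zero_of_finite
    rw [← hprod, Nat.factorization_mul hC0 hI0]
    have : (C.index).factorization p = 0 := by
      apply Nat.factorization_eq_zero_of_not_dvd
      intro hdvd
      exact hp.out.one_lt.ne' (hC.symm.eq_one_of_dvd hdvd)
    simp [this]
  have hcardR : Nat.card ((R : Subgroup C).map C.subtype) = Nat.card Q := by
    have h1 : Nat.card ((R : Subgroup C).map C.subtype) = Nat.card R :=
      (Nat.card_congr (Subgroup.equivMapOfInjective _ _ C.subtype_injective).toEquiv).symm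
    rw [h1, R.card_eq_multiplicity, Q.card_eq_multiplicity, hfact]
  have heq : (R : Subgroup C).map C.subtype = Q :=
    Subgroup.eq_of_le_of_card_ge hQ hcardR.ge
  refine ⟨Q, ?_, ?_⟩
  · rw [← heq]; exact Subgroup.map_subtype_le _
  · rw [← heq]
    exact ⟨u', hR (Subgroup.mem_zpowers u'), rfl⟩

lemma my_normal (h : ∀ x : G, ¬ p ∣ orderOf x → Nat.Coprime (Subgroup.centralizer {x}).index p)
    (P : Sylow p G) : (P : Subgroup G).Normal := by
  classical
  haveI : Fintype (Sylow p G) := Fintype.ofFinite _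
  set pa := p ^ (Nat.card G).factorization p with hpa
  have hpa1 : 1 ≤ pa := Nat.one_le_iff_ne_zero.mpr (pow_ne_zero _ hp.out.pos.ne')
  set S : Finset G := univ.filter (fun y => ¬ p ∣ orderOf y) with hS
  set cent : G → Finset G := fun y =>
    univ.filter (fun u => (∃ i, orderOf u = p ^ i) ∧ u * y = y * u) with hcent
  set sylC : G → Finset (Sylow p G) := fun y =>
    univ.filter (fun Q => (Q : Subgroup G) ≤ Subgroup.centralizer {y}) with hsylC
  set KK : Sylow p G → Finset G := fun Q =>
    univ.filter (fun y => ¬ p ∣ orderOf y ∧ (Q : Subgroup G) ≤ Subgroup.centralizer {y}) with hKK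
  set n := Fintype.card (Sylow p G) with hn
  set k := (KK P).card with hk
  -- Sylow subgroups have pa elements as finsets
  have hQfin : ∀ Q : Sylow p G, (univ.filter (fun x => x ∈ (Q : Subgroup G))).card = pa := by
    intro Q
    rw [← Fintype.card_subtype, ← Nat.card_eq_fintype_card]
    exact Q.card_eq_multiplicity
  -- one mem KK
  have h1KK : ∀ Q : Sylow p G, (1 : G) ∈ KK Q := by
    intro Q
    simp only [hKK, mem_filter, mem_univ, true_and, orderOf_one]
    exact ⟨fun hd => hp.out.one_lt.ne' (Nat.dvd_one.mp hd),
      fun x _ => by simp [Subgroup.mem_centralizer_iff]⟩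
  have hk1 : 1 ≤ k := Finset.card_pos.mpr ⟨1, h1KK P⟩
  -- Step 1 : card G ≤ ∑ y in S, (cent y).card
  have step1 : Fintype.card G ≤ ∑ y ∈ S, (cent y).card := by
    choose u y hmul hcomm hpu hpy using my_decomp' (G := G) (p := p)
    rw [← Finset.card_sigma, ← Finset.card_univ]
    apply Finset.card_le_card_of_injOn (fun g => (⟨y g, u g⟩ : Σ _ : G, G))
    · intro g _
      simp only [Finset.mem_coe, Finset.mem_sigma, hS, hcent, mem_filter, mem_univ, true_and]
      exact ⟨hpy g, hpu g, (hcomm g).eq⟩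
    · intro g1 _ g2 _ hfe
      have h1 : y g1 = y g2 := congrArg Sigma.fst hfe
      have h2 : u g1 = u g2 := by
        have := (Sigma.mk.inj_iff.mp hfe).2
        exact eq_of_heq this
      rw [← hmul g1, ← hmul g2, h1, h2]
  -- Step 2
  have step2 : ∀ y ∈ S, (cent y).card ≤ (sylC y).card * (pa - 1) + 1 := by
    intro y hy
    simp only [hS, mem_filter, mem_univ, true_and] at hy
    have hsub : cent y ⊆ insert 1 ((sylC y).biUnion fun Q =>
        (univ.filter (fun x => x ∈ (Q : Subgroup G))).erase 1) := by
      intro v hv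
      simp only [hcent, mem_filter, mem_univ, true_and] at hv
      obtain ⟨hvp, hvcomm⟩ := hv
      rcases eq_or_ne v 1 with rfl | hv1
      · exact Finset.mem_insert_self 1 _
      · apply Finset.mem_insert_of_mem
        have hvC : v ∈ Subgroup.centralizer {y} :=
          Subgroup.mem_centralizer_singleton_iff.mpr hvcomm
        obtain ⟨Q, hQle, hvQ⟩ := my_sylow_le' (Subgroup.centralizer {y}) (h y hy) hvC hvp
        apply Finset.mem_biUnion.mpr
        refine ⟨Q, by simp [hsylC, hQle], Finset.mem_erase.mpr ⟨hv1, by simp [hvQ]⟩⟩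
    have hbi : ((sylC y).biUnion fun Q =>
        (univ.filter (fun x => x ∈ (Q : Subgroup G))).erase 1).card ≤ (sylC y).card * (pa - 1) := by
      apply Finset.card_biUnion_le.trans
      have heq : ∀ Q ∈ sylC y,
          ((univ.filter (fun x => x ∈ (Q : Subgroup G))).erase 1).card = pa - 1 := by
        intro Q _
        rw [Finset.card_erase_of_mem (by simp [Subgroup.one_mem]), hQfin Q]
      rw [Finset.sum_congr rfl heq, Finset.sum_const, smul_eq_mul]
    have := (Finset.card_le_card hsub).trans (Finset.card_insert_le _ _)
    omega
  -- Step 3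
  have hmem : ∀ (g : G) (Q : Sylow p G) (x : G),
      x ∈ ((g • Q : Sylow p G) : Subgroup G) ↔ g⁻¹ * x * g ∈ (Q : Subgroup G) := by
    intro g Q x
    rw [Sylow.smul_def, Sylow.pointwise_smul_def,
      Subgroup.mem_pointwise_smul_iff_inv_smul_mem]
    simp [MulAut.smul_def]
  have hconj : ∀ (g : G) (Q : Sylow p G) (y : G),
      (¬p ∣ orderOf y ∧ (Q : Subgroup G) ≤ Subgroup.centralizer {y}) →
      (¬ p ∣ orderOf (g * y * g⁻¹) ∧
        ((g • Q : Sylow p G) : Subgroup G) ≤ Subgroup.centralizer {g * y * g⁻¹}) := by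
    rintro g Q y ⟨h1, h2⟩
    constructor
    · have : orderOf (g * y * g⁻¹) = orderOf y := by
        have := orderOf_injective (MulAut.conj g).toMonoidHom (MulAut.conj g).injective y
        simpa [MulAut.conj_apply] using this
      rwa [this]
    · intro x hx
      rw [hmem] at hx
      have hx2 := h2 hx
      rw [Subgroup.mem_centralizer_singleton_iff] at hx2 ⊢
      calc x * (g * y * g⁻¹) = g * ((g⁻¹ * x * g) * y) * g⁻¹ := by group
        _ = g * (y * (g⁻¹ * x * g)) * g⁻¹ := by rw [hx2]
        _ = (g * y * g⁻¹) * x := by group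
  have hKKcard : ∀ Q : Sylow p G, (KK Q).card = k := by
    intro Q
    obtain ⟨g, hg⟩ := MulAction.exists_smul_eq G P Q
    rw [hk]
    symm
    apply Finset.card_bij (fun y _ => g * y * g⁻¹)
    · intro y hy
      simp only [hKK, mem_filter, mem_univ, true_and] at hy ⊢
      have := hconj g P y hy
      rwa [hg] at this
    · intro y1 h1 y2 h2 he
      have : g * y1 = g * y2 := mul_right_cancel he
      exact mul_left_cancel this
    · intro b hb
      simp only [hKK, mem_filter, mem_univ, true_and] at hb
      refine ⟨g⁻¹ * b * g, ?_, by group⟩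
      simp only [hKK, mem_filter, mem_univ, true_and]
      have := hconj g⁻¹ Q b hb
      rw [← hg, inv_smul_smul, inv_inv] at this
      exact this
  have step3 : ∑ y ∈ S, (sylC y).card = n * k := by
    have h1 : ∀ y, (sylC y).card = ∑ Q ∈ (univ : Finset (Sylow p G)),
        if (Q : Subgroup G) ≤ Subgroup.centralizer {y} then 1 else 0 := by
      intro y; rw [hsylC]; exact Finset.card_filter _ _
    rw [Finset.sum_congr rfl (fun y _ => h1 y), Finset.sum_comm]
    have h2 : ∀ Q : Sylow p G,
        (∑ y ∈ S, if (Q : Subgroup G) ≤ Subgroup.centralizer {y} then 1 else 0)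
        = (KK Q).card := by
      intro Q
      rw [← Finset.card_filter, hS, Finset.filter_filter, hKK]
    rw [Finset.sum_congr rfl (fun Q _ => h2 Q), Finset.sum_congr rfl (fun Q _ => hKKcard Q),
      Finset.sum_const, smul_eq_mul, Finset.card_univ, hn]
  -- Step 5 cover
  have step5 : S.card ≤ n * (k - 1) + 1 := by
    have hsub : S ⊆ insert 1 ((univ : Finset (Sylow p G)).biUnion fun Q => (KK Q).erase 1) := by
      intro y hy
      simp only [hS, mem_filter, mem_univ, true_and] at hy
      rcases eq_or_ne y 1 with rfl | hy1
      · exact Finset.mem_insert_self 1 _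
      apply Finset.mem_insert_of_mem
      obtain ⟨Q, hQle, -⟩ := my_sylow_le' (Subgroup.centralizer {y}) (h y hy)
        (Subgroup.one_mem _) ⟨0, by simp⟩
      refine Finset.mem_biUnion.mpr ⟨Q, Finset.mem_univ Q, Finset.mem_erase.mpr ⟨hy1, ?_⟩⟩
      simp only [hKK, mem_filter, mem_univ, true_and]
      exact ⟨hy, hQle⟩
    have hb : ((univ : Finset (Sylow p G)).biUnion fun Q => (KK Q).erase 1).card
        ≤ n * (k - 1) := by
      apply Finset.card_biUnion_le.trans
      have heq : ∀ Q ∈ (univ : Finset (Sylow p G)), ((KK Q).erase 1).card = k - 1 := by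
        intro Q _
        rw [Finset.card_erase_of_mem (h1KK Q), hKKcard Q]
      rw [Finset.sum_congr rfl heq, Finset.sum_const, smul_eq_mul, Finset.card_univ, hn]
    have := (Finset.card_le_card hsub).trans (Finset.card_insert_le _ _)
    omega
  -- Step 4
  have step4 : n * (k * pa) ≤ Fintype.card G := by
    have hsubN : k * pa ≤ (univ.filter (fun x => x ∈ Subgroup.normalizer (P : Set G))).card := by
      rw [hk, ← hQfin P, ← Finset.card_product]
      apply Finset.card_le_card_of_injOn (fun yu => yu.1 * yu.2)
      · rintro ⟨y, v⟩ hyv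
        simp only [Finset.mem_coe, Finset.mem_product, hKK, mem_filter, mem_univ, true_and] at hyv
        obtain ⟨⟨hyp, hyle⟩, hv⟩ := hyv
        simp only [Finset.mem_coe, mem_filter, mem_univ, true_and]
        apply Subgroup.mul_mem
        · apply Subgroup.mem_normalizer_iff.mpr
          intro x
          constructor
          · intro hx
            have hc := Subgroup.mem_centralizer_singleton_iff.mp (hyle hx)
            have : y * x * y⁻¹ = x := by
              rw [← hc]; group
            rwa [this]
          · intro hx
            have hc := Subgroup.mem_centralizer_singleton_iff.mp (hyle hx)
            have : y * x * y⁻¹ = x := by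
              have h3 : (y * x * y⁻¹) * y = y * (y * x * y⁻¹) := hc
              have h4 : y * x = y * (y * x * y⁻¹) := by
                calc y * x = (y * x * y⁻¹) * y := by group
                  _ = y * (y * x * y⁻¹) := h3
              have := mul_left_cancel h4
              rw [← this]
            rwa [← this]
        · exact Subgroup.le_normalizer hv
      · rintro ⟨y1, v1⟩ hy1 ⟨y2, v2⟩ hy2 he
        simp only [Finset.coe_product, Set.mem_prod, Finset.mem_coe, hKK, mem_filter,
          mem_univ, true_and] at hy1 hy2
        obtain ⟨⟨hy1p, hy1le⟩, hv1⟩ := hy1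
        obtain ⟨⟨hy2p, hy2le⟩, hv2⟩ := hy2
        simp only at he
        have hz1 : y2⁻¹ * y1 = v2 * v1⁻¹ := by
          have h6 : (y2 * (y2⁻¹ * y1)) * v1 = (y2 * (v2 * v1⁻¹)) * v1 := by
            calc (y2 * (y2⁻¹ * y1)) * v1 = y1 * v1 := by group
              _ = y2 * v2 := he
              _ = (y2 * (v2 * v1⁻¹)) * v1 := by group
          exact mul_left_cancel (mul_right_cancel h6)
        have hzP : y2⁻¹ * y1 ∈ (P : Subgroup G) := by
          rw [hz1]; exact Subgroup.mul_mem _ hv2 (Subgroup.inv_mem _ hv1)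
        have hcz := Subgroup.mem_centralizer_singleton_iff.mp (hy2le hzP)
        have hcomm : Commute y2 (y2⁻¹ * y1) := hcz.symm
        have hoz : orderOf (y2⁻¹ * y1) ∣ p ^ (Nat.card G).factorization p := by
          have h5 : orderOf (⟨y2⁻¹ * y1, hzP⟩ : (P : Subgroup G)) ∣ Nat.card (P : Subgroup G) :=
            orderOf_dvd_natCard _
          rw [P.card_eq_multiplicity, Subgroup.orderOf_mk] at h5
          exact h5
        obtain ⟨j, hjle, hj⟩ := (Nat.dvd_prime_pow hp.out).mp hoz
        have hj0 : j = 0 := by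
          by_contra hjne
          have hco : (orderOf y2).Coprime (orderOf (y2⁻¹ * y1)) := by
            rw [hj]
            exact (((Nat.Prime.coprime_iff_not_dvd hp.out).mpr hy2p).symm).pow_right j
          have h8 := hcomm.orderOf_mul_eq_mul_orderOf_of_coprime hco
          rw [mul_inv_cancel_left] at h8
          apply hy1p
          rw [h8, hj]
          exact Dvd.dvd.mul_left (dvd_pow_self p hjne) _
        have hz2 : y2⁻¹ * y1 = 1 := by
          apply orderOf_eq_one_iff.mp
          rw [hj, hj0, pow_zero]
        have hyy : y1 = y2 := (inv_mul_eq_one.mp hz2).symm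
        have hvv : v1 = v2 := by
          apply mul_left_cancel (a := y1)
          rw [he, hyy]
        simp [hyy, hvv]
    have hN : k * pa ≤ Nat.card (Subgroup.normalizer (P : Set G)) := by
      rw [Nat.card_eq_fintype_card, Fintype.card_subtype]
      exact hsubN
    calc n * (k * pa) ≤ n * Nat.card (Subgroup.normalizer (P : Set G)) := Nat.mul_le_mul_left n hN
      _ = (Subgroup.normalizer (P : Set G)).index * Nat.card (Subgroup.normalizer (P : Set G)) := by
          rw [hn, ← Nat.card_eq_fintype_card, P.card_eq_index_normalizer]
      _ = Nat.card G := by rw [mul_comm]; exact (Subgroup.normalizer (P : Set G)).card_mul_index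
      _ = Fintype.card G := Nat.card_eq_fintype_card
  -- combine
  have harith : Fintype.card G + n ≤ Fintype.card G + 1 := by
    have c1 : Fintype.card G ≤ n * k * (pa - 1) + S.card := by
      calc Fintype.card G ≤ ∑ y ∈ S, (cent y).card := step1
        _ ≤ ∑ y ∈ S, ((sylC y).card * (pa - 1) + 1) := Finset.sum_le_sum step2
        _ = (∑ y ∈ S, (sylC y).card) * (pa - 1) + S.card := by
            rw [Finset.sum_add_distrib, ← Finset.sum_mul, Finset.sum_const, smul_eq_mul, mul_one]
        _ = n * k * (pa - 1) + S.card := by rw [step3]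
    calc Fintype.card G + n ≤ n * k * (pa - 1) + S.card + n := by omega
      _ ≤ n * k * (pa - 1) + (n * (k - 1) + 1) + n := by omega
      _ = n * k * (pa - 1) + n * k + 1 := by
          have : n * (k - 1) + n = n * k := by
            conv_rhs => rw [← Nat.succ_pred_eq_of_pos hk1]
            rw [Nat.mul_succ, Nat.pred_eq_sub_one]
          omega
      _ = n * (k * pa) + 1 := by
          have : n * k * (pa - 1) + n * k = n * k * pa := by
            conv_rhs => rw [← Nat.succ_pred_eq_of_pos hpa1]
            rw [Nat.mul_succ, Nat.pred_eq_sub_one]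
          rw [← mul_assoc]; omega
      _ ≤ Fintype.card G + 1 := by omega
  have hn1 : n ≤ 1 := by omega
  have hnormtop : (Subgroup.normalizer (P : Set G)).index = 1 := by
    have := P.card_eq_index_normalizer
    rw [Nat.card_eq_fintype_card, ← hn] at this
    have hn0 : 1 ≤ n := Fintype.card_pos
    omega
  exact (Subgroup.normalizer_eq_top_iff (H := (P : Subgroup G))).mp (Subgroup.index_eq_one.mp hnormtop)

end Aux

theorem stmt_8 (G : Type*) [Group G] [Fintype G] (p : ℕ) [Fact p.Prime]
    (h : ∀ x : G, ¬ p ∣ orderOf x → Nat.Coprime (Subgroup.centralizer {x}).index p) :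
    ∀ P : Sylow p G, (P : Subgroup G).Normal ∧
      ∃ H : Subgroup G, H.Normal ∧ IsCompl (P : Subgroup G) H := by
  intro P
  have hnormal : (P : Subgroup G).Normal := my_normal h P
  refine ⟨hnormal, ?_⟩
  haveI := hnormal
  obtain ⟨H, hH⟩ := Subgroup.exists_right_complement'_of_coprime P.card_coprime_index
  have hPH : ∀ x ∈ H, ∀ u ∈ (P : Subgroup G), u * x = x * u := by
    intro x hx u hu
    have hxord : ¬ p ∣ orderOf x := by
      intro hdvd
      have h1 : orderOf x ∣ Nat.card H := by
        have := orderOf_dvd_natCard (⟨x, hx⟩ : H)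
        rwa [Subgroup.orderOf_mk] at this
      have h2 : (P : Subgroup G).index = Nat.card H := hH.symm.index_eq_card
      exact P.not_dvd_index (h2 ▸ (hdvd.trans h1))
    obtain ⟨Q, hQle, -⟩ := my_sylow_le' (Subgroup.centralizer {x}) (h x hxord)
      (Subgroup.one_mem _) ⟨0, by simp⟩
    have hQP : Q = P := by
      obtain ⟨g, hg⟩ := MulAction.exists_smul_eq G P Q
      rw [← hg, Sylow.smul_eq_of_normal]
    rw [hQP] at hQle
    exact Subgroup.mem_centralizer_singleton_iff.mp (hQle hu)
  refine ⟨H, ?_, hH.isCompl⟩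
  constructor
  intro x hx g
  obtain ⟨⟨u, v⟩, huv, -⟩ := hH.existsUnique g
  have hvx : (v : G) * x * (v : G)⁻¹ ∈ H :=
    Subgroup.mul_mem _ (Subgroup.mul_mem _ v.2 hx) (Subgroup.inv_mem _ v.2)
  have hcomm := hPH _ hvx (u : G) u.2
  have hgx : g * x * g⁻¹ = (v : G) * x * (v : G)⁻¹ := by
    rw [← huv]
    calc ((u : G) * (v : G)) * x * ((u : G) * (v : G))⁻¹
        = (u : G) * ((v : G) * x * (v : G)⁻¹) * (u : G)⁻¹ := by group
      _ = (v : G) * x * (v : G)⁻¹ := by rw [hcomm, mul_assoc, mul_inv_cancel, mul_one]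
  rw [hgx]
  exact hvx
end

section
/- Let p be a prime and let A × B act faithfully via automorphisms on a finite p-group P, where A is a p'-group and B is a p-group. If A acts trivially on the fixed-point subgroup C_P(B), then A = 1. -/
universe u

open scoped commutatorElement

def subMulAction' {P : Type u} [Group P] {M : Type*} [Monoid M] [MulDistribMulAction M P]
    (Q : Subgroup P) (hQ : ∀ (g : M) (x : P), x ∈ Q → g • x ∈ Q) :
    MulDistribMulAction M Q where
  smul g x := ⟨g • (x : P), hQ g x x.2⟩
  one_smul x := Subtype.ext (one_smul M (x : P))
  mul_smul g h x := Subtype.ext (mul_smul g h (x : P))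
  smul_mul g x y := Subtype.ext (smul_mul' g (x : P) (y : P))
  smul_one g := Subtype.ext (smul_one g)

theorem auxABC {p : ℕ} (hp : p.Prime) {A : Type*} {B : Type*}
    [Group A] [Fintype A] [Group B] [Fintype B]
    (hA : Nat.Coprime (Nat.card A) p) (hB : IsPGroup p B) :
    ∀ (n : ℕ) (P : Type u) [Group P] [Fintype P] [MulDistribMulAction (A × B) P],
      Nat.card P ≤ n → IsPGroup p P →
      (∀ x : P, (∀ b : B, ((1 : A), b) • x = x) → ∀ a : A, (a, (1 : B)) • x = x) →
      ∀ (a : A) (x : P), (a, (1 : B)) • x = x := by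
  intro n
  induction n using Nat.strong_induction_on with
  | _ n ih =>
  intro P instG instF instM hcard hP htriv
  haveI : Fact p.Prime := ⟨hp⟩
  -- the fixed-point subgroup of the A-part
  set C : Subgroup P :=
    { carrier := {x | ∀ a : A, (a, (1 : B)) • x = x}
      one_mem' := fun a => smul_one _
      mul_mem' := fun {x y} hx hy a => by
        rw [smul_mul', hx a, hy a]
      inv_mem' := fun {x} hx a => by
        rw [smul_inv', hx a] } with hCdef
  have hmemC : ∀ x : P, x ∈ C ↔ ∀ a : A, (a, (1 : B)) • x = x := fun x => Iff.rfl
  -- it suffices to show C = ⊤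
  suffices hCtop : ∀ x : P, x ∈ C by
    intro a x
    exact hCtop x a
  by_contra hne
  push_neg at hne
  obtain ⟨x₀, hx₀⟩ := hne
  have hCne : C ≠ ⊤ := fun h => hx₀ (h ▸ Subgroup.mem_top x₀)
  -- C is invariant under the whole action
  have hCinv : ∀ (g : A × B) (x : P), x ∈ C → g • x ∈ C := by
    rintro ⟨a, b⟩ x hx a'
    have key : ((a', 1) : A × B) * (a, b) = (a, b) * (a⁻¹ * a' * a, 1) := by
      ext <;> simp [mul_assoc]
    rw [← mul_smul, key, mul_smul, hx (a⁻¹ * a' * a)]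
  -- every proper invariant subgroup is pointwise A-fixed (induction hypothesis)
  have hsub : ∀ Q : Subgroup P, (∀ (g : A × B) (x : P), x ∈ Q → g • x ∈ Q) → Q ≠ ⊤ →
      ∀ (a : A) (x : P), x ∈ Q → (a, (1 : B)) • x = x := by
    intro Q hQinv hQne a x hx
    obtain ⟨y, hy⟩ : ∃ y : P, y ∉ Q := by
      by_contra h
      push_neg at h
      exact hQne ((Subgroup.eq_top_iff' Q).mpr h)
    letI : Fintype Q := Fintype.ofFinite Q
    letI : MulDistribMulAction (A × B) Q := subMulAction' Q hQinv
    have hcardQ : Nat.card Q < n :=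
      lt_of_lt_of_le (Finite.card_subtype_lt (p := (· ∈ Q)) hy) hcard
    have htrivQ : ∀ x : Q, (∀ b : B, ((1 : A), b) • x = x) → ∀ a : A, (a, (1 : B)) • x = x := by
      intro z hz a'
      apply Subtype.ext
      exact htriv (z : P) (fun b => congrArg Subtype.val (hz b)) a'
    have := ih (Nat.card Q) hcardQ Q le_rfl (hP.to_subgroup Q) htrivQ a ⟨x, hx⟩
    exact congrArg Subtype.val this
  -- C is normal
  have hnormal : C.Normal := by
    have hNinv : ∀ (g : A × B) (x : P), x ∈ (Subgroup.normalizer (C : Set P)) → g • x ∈ (Subgroup.normalizer (C : Set P)) := by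
      intro g x hx
      rw [Subgroup.mem_normalizer_iff] at hx ⊢
      intro c
      have h1 : c ∈ C ↔ g⁻¹ • c ∈ C :=
        ⟨fun h => hCinv g⁻¹ c h, fun h => by
          have := hCinv g _ h
          rwa [smul_inv_smul] at this⟩
      have h2 : (g • x) * c * (g • x)⁻¹ = g • (x * (g⁻¹ • c) * x⁻¹) := by
        rw [smul_mul', smul_mul', smul_inv', smul_inv_smul]
      rw [h1, hx (g⁻¹ • c), h2]
      constructor
      · intro h; exact hCinv g _ h
      · intro h
        have := hCinv g⁻¹ _ h
        rwa [inv_smul_smul] at this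
    have hnc : NormalizerCondition P := by
      haveI := hP.isNilpotent
      exact normalizerCondition_of_isNilpotent
    have hNtop : (Subgroup.normalizer (C : Set P)) = ⊤ := by
      by_contra hN
      have hle : (Subgroup.normalizer (C : Set P)) ≤ C := fun x hx => fun a => hsub (Subgroup.normalizer (C : Set P)) hNinv hN a x hx
      exact (hnc C (lt_top_iff_ne_top.mpr hCne)).not_ge hle
    exact Subgroup.normalizer_eq_top_iff.mp hNtop
  haveI := hnormal
  -- B acts on the quotient group P ⧸ C
  letI actB : MulAction B (P ⧸ C) :=
    { smul := fun b => Quotient.map' (fun x => ((1 : A), b) • x) (by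
        intro x y h
        rw [QuotientGroup.leftRel_apply] at h ⊢
        have : ((1 : A), b) • (x⁻¹ * y) ∈ C := hCinv _ _ h
        rwa [smul_mul', smul_inv'] at this)
      one_smul := fun q => Quotient.inductionOn' q (fun x => by
        show Quotient.map' _ _ (Quotient.mk'' x) = _
        rw [Quotient.map'_mk'']
        rw [show (((1 : A), (1 : B)) : A × B) = 1 from rfl, one_smul])
      mul_smul := fun b₁ b₂ q => Quotient.inductionOn' q (fun x => by
        show Quotient.map' _ _ (Quotient.mk'' x) = Quotient.map' _ _ (Quotient.map' _ _ (Quotient.mk'' x))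
        rw [Quotient.map'_mk'', Quotient.map'_mk'', Quotient.map'_mk'']
        rw [← mul_smul, Prod.mk_mul_mk, one_mul]) }
  have hsmul_mk : ∀ (b : B) (x : P),
      b • (QuotientGroup.mk x : P ⧸ C) = QuotientGroup.mk (((1 : A), b) • x) :=
    fun b x => Quotient.map'_mk'' _ _ _
  haveI : Finite (P ⧸ C) := Quotient.finite _
  have hmod := hB.card_modEq_card_fixedPoints (P ⧸ C)
  have hPQ : IsPGroup p (P ⧸ C) := hP.to_quotient C
  have hdvd : p ∣ Nat.card (P ⧸ C) := by
    haveI : Nontrivial (P ⧸ C) :=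
      ⟨⟨QuotientGroup.mk x₀, 1, fun h => hx₀ ((QuotientGroup.eq_one_iff x₀).mp h)⟩⟩
    obtain ⟨k, hk⟩ := IsPGroup.iff_card.mp hPQ
    rw [hk]
    refine dvd_pow_self p (fun h0 => ?_)
    rw [h0, pow_zero] at hk
    exact (Finite.one_lt_card (α := P ⧸ C)).ne' hk
  have hdvdfix : p ∣ Nat.card (MulAction.fixedPoints B (P ⧸ C)) :=
    (Nat.modEq_zero_iff_dvd).mp (hmod.symm.trans ((Nat.modEq_zero_iff_dvd).mpr hdvd))
  have h1fix : (1 : P ⧸ C) ∈ MulAction.fixedPoints B (P ⧸ C) := by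
    intro b
    show b • (1 : P ⧸ C) = 1
    rw [← QuotientGroup.mk_one, hsmul_mk, smul_one]
  obtain ⟨z, hzfix, hzne⟩ : ∃ z ∈ MulAction.fixedPoints B (P ⧸ C), z ≠ 1 := by
    by_contra h
    push_neg at h
    haveI : Unique (MulAction.fixedPoints B (P ⧸ C)) :=
      { default := ⟨1, h1fix⟩, uniq := fun z => Subtype.ext (h z z.2) }
    rw [Nat.card_unique] at hdvdfix
    exact hp.one_lt.ne' (Nat.dvd_one.mp hdvdfix)
  obtain ⟨y, rfl⟩ := QuotientGroup.mk_surjective z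
  have hynot : y ∉ C := fun h => hzne ((QuotientGroup.eq_one_iff y).mpr h)
  have hyB : ∀ b : B, (((1 : A), b) • y)⁻¹ * y ∈ C := by
    intro b
    have h1 : (QuotientGroup.mk (((1 : A), b) • y) : P ⧸ C) = QuotientGroup.mk y := by
      rw [← hsmul_mk]; exact hzfix b
    exact QuotientGroup.eq.mp h1
  -- the subgroup of elements whose coset is B-fixed
  set Q : Subgroup P :=
    { carrier := {x | ∀ b : B, (((1 : A), b) • x)⁻¹ * x ∈ C}
      one_mem' := by
        intro b
        rw [smul_one]
        simpa using C.one_mem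
      mul_mem' := fun {x y} hx hy b => by
        have hconj : y⁻¹ * ((((1 : A), b) • x)⁻¹ * x) * y ∈ C := by
          have h1 := hnormal.conj_mem _ (hx b) y⁻¹
          simpa [mul_assoc] using h1
        have heq : (((1 : A), b) • (x * y))⁻¹ * (x * y) =
            ((((1 : A), b) • y)⁻¹ * y) * (y⁻¹ * ((((1 : A), b) • x)⁻¹ * x) * y) := by
          rw [smul_mul']; group
        show (((1 : A), b) • (x * y))⁻¹ * (x * y) ∈ C
        rw [heq]
        exact mul_mem (hy b) hconj
      inv_mem' := fun {x} hx b => by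
        have heq : (((1 : A), b) • x⁻¹)⁻¹ * x⁻¹ = x * ((((1 : A), b) • x)⁻¹ * x)⁻¹ * x⁻¹ := by
          rw [smul_inv']; group
        show (((1 : A), b) • x⁻¹)⁻¹ * x⁻¹ ∈ C
        rw [heq]
        exact hnormal.conj_mem _ (inv_mem (hx b)) x } with hQdef
  have hQinv : ∀ (g : A × B) (x : P), x ∈ Q → g • x ∈ Q := by
    rintro ⟨a₀, b₀⟩ x hx b
    have key : (((1 : A), b) : A × B) * (a₀, b₀) = (a₀, b₀) * (1, b₀⁻¹ * b * b₀) := by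
      ext <;> simp [mul_assoc]
    show (((1 : A), b) • ((a₀, b₀) • x))⁻¹ * ((a₀, b₀) • x) ∈ C
    have heq : (((1 : A), b) • ((a₀, b₀) • x))⁻¹ * ((a₀, b₀) • x) =
        ((a₀, b₀) : A × B) • ((((1 : A), b₀⁻¹ * b * b₀) • x)⁻¹ * x) := by
      rw [← mul_smul, key, mul_smul, smul_mul', smul_inv']
    rw [heq]
    exact hCinv _ _ (hx _)
  by_cases hQtop : Q = ⊤
  swap
  · exact hynot (fun a => hsub Q hQinv hQtop a y hyB)
  have hPB : ∀ (x : P) (b : B), (((1 : A), b) • x)⁻¹ * x ∈ C := by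
    intro x b
    have : x ∈ Q := by rw [hQtop]; exact Subgroup.mem_top x
    exact this b
  -- the three-subgroups argument in the semidirect product
  let φ : (A × B) →* MulAut P := MulDistribMulAction.toMulAut (A × B) P
  let PG : Subgroup (P ⋊[φ] (A × B)) := SemidirectProduct.inl.range
  let SG : Subgroup (P ⋊[φ] (A × B)) :=
    (SemidirectProduct.inr.comp (MonoidHom.inl A B)).range
  let BG : Subgroup (P ⋊[φ] (A × B)) :=
    (SemidirectProduct.inr.comp (MonoidHom.inr A B)).range
  have hconj : ∀ (g : A × B) (x : P),
      SemidirectProduct.inr (φ := φ) g * SemidirectProduct.inl x * (SemidirectProduct.inr g)⁻¹ =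
        SemidirectProduct.inl (g • x) := by
    intro g x
    rw [← map_inv]
    exact (SemidirectProduct.inl_aut g x).symm
  have h1 : ⁅⁅PG, BG⁆, SG⁆ = ⊥ := by
    have hcent : ⁅PG, BG⁆ ≤ Subgroup.centralizer (SG : Set _) := by
      rw [Subgroup.commutator_le]
      rintro _ ⟨x, rfl⟩ _ ⟨b, rfl⟩
      have hc : ⁅SemidirectProduct.inl (φ := φ) x,
          ((SemidirectProduct.inr (φ := φ)).comp (MonoidHom.inr A B)) b⁆ =
          SemidirectProduct.inl (x * (((1 : A), b) • x)⁻¹) := by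
        show SemidirectProduct.inl x * SemidirectProduct.inr ((1 : A), b) *
            (SemidirectProduct.inl x)⁻¹ * (SemidirectProduct.inr ((1 : A), b))⁻¹ = _
        have h2 := hconj ((1 : A), b) x⁻¹
        calc SemidirectProduct.inl x * SemidirectProduct.inr ((1 : A), b) *
              (SemidirectProduct.inl x)⁻¹ * (SemidirectProduct.inr ((1 : A), b))⁻¹
            = SemidirectProduct.inl x * (SemidirectProduct.inr ((1 : A), b) *
              SemidirectProduct.inl x⁻¹ * (SemidirectProduct.inr ((1 : A), b))⁻¹) := by
              rw [← map_inv]; group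
          _ = SemidirectProduct.inl x * SemidirectProduct.inl (((1 : A), b) • x⁻¹) := by rw [h2]
          _ = SemidirectProduct.inl (x * (((1 : A), b) • x)⁻¹) := by
              rw [← map_mul, smul_inv']
      rw [hc]
      rw [Subgroup.mem_centralizer_iff]
      rintro _ ⟨a, rfl⟩
      have hwC : x * (((1 : A), b) • x)⁻¹ ∈ C := by
        have h3 := hnormal.conj_mem _ (hPB x b) x
        have heq : x * ((((1 : A), b) • x)⁻¹ * x) * x⁻¹ = x * (((1 : A), b) • x)⁻¹ := by group
        rwa [heq] at h3
      show SemidirectProduct.inr (a, (1 : B)) * SemidirectProduct.inl (x * (((1 : A), b) • x)⁻¹)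
          = SemidirectProduct.inl (x * (((1 : A), b) • x)⁻¹) * SemidirectProduct.inr (a, (1 : B))
      calc SemidirectProduct.inr (φ := φ) (a, (1 : B)) *
            SemidirectProduct.inl (x * (((1 : A), b) • x)⁻¹)
          = (SemidirectProduct.inr (a, (1 : B)) *
            SemidirectProduct.inl (x * (((1 : A), b) • x)⁻¹) *
            (SemidirectProduct.inr (a, (1 : B)))⁻¹) * SemidirectProduct.inr (a, (1 : B)) := by
            group
        _ = SemidirectProduct.inl (((a, (1 : B)) : A × B) • (x * (((1 : A), b) • x)⁻¹)) *
            SemidirectProduct.inr (a, (1 : B)) := by rw [hconj]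
        _ = SemidirectProduct.inl (x * (((1 : A), b) • x)⁻¹) *
            SemidirectProduct.inr (a, (1 : B)) := by rw [hwC a]
    rw [eq_bot_iff, Subgroup.commutator_le]
    intro g1 hg1 g2 hg2
    have hcomm := Subgroup.mem_centralizer_iff.mp (hcent hg1) g2 hg2
    rw [Subgroup.mem_bot]
    exact commutatorElement_eq_one_iff_commute.mpr hcomm.symm
  have h2 : ⁅⁅BG, SG⁆, PG⁆ = ⊥ := by
    have hBS : ⁅BG, SG⁆ = ⊥ := by
      rw [eq_bot_iff, Subgroup.commutator_le]
      rintro _ ⟨b, rfl⟩ _ ⟨a, rfl⟩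
      rw [Subgroup.mem_bot]
      show ⁅SemidirectProduct.inr (φ := φ) ((1 : A), b), SemidirectProduct.inr (a, (1 : B))⁆ = 1
      rw [← map_commutatorElement]
      have : ⁅(((1 : A), b) : A × B), (a, (1 : B))⁆ = 1 := by
        rw [commutatorElement_def, Prod.mk_mul_mk, Prod.inv_mk, Prod.inv_mk,
          Prod.mk_mul_mk, Prod.mk_mul_mk]
        simp
      rw [this, map_one]
    rw [hBS, Subgroup.commutator_bot_left]
  have h3 : ⁅⁅SG, PG⁆, BG⁆ = ⊥ := Subgroup.commutator_commutator_eq_bot_of_rotate h1 h2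
  -- extract the key fixed-point property
  have hw : ∀ (a : A) (v : P) (b : B),
      ((1 : A), b) • (((a, (1 : B)) • v) * v⁻¹) = ((a, (1 : B)) • v) * v⁻¹ := by
    intro a v b
    have hc1 : ⁅SemidirectProduct.inr (φ := φ) (a, (1 : B)), SemidirectProduct.inl (φ := φ) v⁆ ∈ ⁅SG, PG⁆ :=
      Subgroup.commutator_mem_commutator ⟨a, rfl⟩ ⟨v, rfl⟩
    have hcb : ⁅⁅SemidirectProduct.inr (φ := φ) (a, (1 : B)), SemidirectProduct.inl (φ := φ) v⁆,
        SemidirectProduct.inr ((1 : A), b)⁆ ∈ (⊥ : Subgroup (P ⋊[φ] (A × B))) := by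
      rw [← h3]
      exact Subgroup.commutator_mem_commutator hc1 ⟨b, rfl⟩
    rw [Subgroup.mem_bot] at hcb
    have hcv : ⁅SemidirectProduct.inr (φ := φ) (a, (1 : B)), SemidirectProduct.inl (φ := φ) v⁆ =
        SemidirectProduct.inl (((a, (1 : B)) • v) * v⁻¹) := by
      rw [commutatorElement_def]
      calc SemidirectProduct.inr (φ := φ) (a, (1 : B)) * SemidirectProduct.inl v *
            (SemidirectProduct.inr (a, (1 : B)))⁻¹ * (SemidirectProduct.inl v)⁻¹
          = (SemidirectProduct.inr (a, (1 : B)) * SemidirectProduct.inl v *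
            (SemidirectProduct.inr (a, (1 : B)))⁻¹) * (SemidirectProduct.inl v)⁻¹ := by group
        _ = SemidirectProduct.inl (((a, (1 : B)) : A × B) • v) * (SemidirectProduct.inl v)⁻¹ := by
            rw [hconj]
        _ = SemidirectProduct.inl (((a, (1 : B)) • v) * v⁻¹) := by rw [← map_inv, ← map_mul]
    rw [hcv] at hcb
    have hcomm : Commute (SemidirectProduct.inl (φ := φ) (((a, (1 : B)) • v) * v⁻¹))
        (SemidirectProduct.inr ((1 : A), b)) := commutatorElement_eq_one_iff_commute.mp hcb
    have hfin : SemidirectProduct.inl (φ := φ) (((1 : A), b) • (((a, (1 : B)) • v) * v⁻¹)) =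
        SemidirectProduct.inl (((a, (1 : B)) • v) * v⁻¹) := by
      rw [← hconj]
      rw [← hcomm.eq]
      group
    exact SemidirectProduct.inl_injective hfin
  -- conclude: every element of P is A-fixed, contradicting x₀ ∉ C
  apply hx₀
  intro a
  have hwD : ∀ b : B, ((1 : A), b) • (((a, (1 : B)) • x₀) * x₀⁻¹) = ((a, (1 : B)) • x₀) * x₀⁻¹ :=
    hw a x₀
  have hwA : ∀ a' : A, (a', (1 : B)) • (((a, (1 : B)) • x₀) * x₀⁻¹) =
      ((a, (1 : B)) • x₀) * x₀⁻¹ := htriv _ hwD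
  set w := ((a, (1 : B)) • x₀) * x₀⁻¹ with hwdef
  have hax : (a, (1 : B)) • x₀ = w * x₀ := by rw [hwdef]; group
  have hpow : ∀ k : ℕ, ((a, (1 : B)) : A × B) ^ k • x₀ = w ^ k * x₀ := by
    intro k
    induction k with
    | zero => simp
    | succ k ihk =>
      rw [pow_succ', mul_smul, ihk, smul_mul', smul_pow', hwA a, hax, pow_succ']
      group
  have hordw : w ^ (Nat.card A) = 1 := by
    have h1 : ((a, (1 : B)) : A × B) ^ (Nat.card A) = 1 := by
      rw [Prod.pow_mk, one_pow, pow_card_eq_one']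
      rfl
    have h2 := hpow (Nat.card A)
    rw [h1, one_smul] at h2
    exact (mul_eq_right.mp h2.symm)
  have hdvd1 : orderOf w ∣ Nat.card A := orderOf_dvd_of_pow_eq_one hordw
  obtain ⟨k, hk⟩ := hP w
  have hdvd2 : orderOf w ∣ p ^ k := orderOf_dvd_of_pow_eq_one hk
  have hw1 : w = 1 := by
    rw [← orderOf_eq_one_iff]
    exact Nat.dvd_one.mp ((hA.pow_right k) ▸ Nat.dvd_gcd hdvd1 hdvd2)
  rw [hax, hw1, one_mul]

theorem stmt_9 (p : ℕ) (hp : p.Prime) (P A B : Type*) [Group P] [Fintype P]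
    [Group A] [Fintype A] [Group B] [Fintype B]
    [MulDistribMulAction (A × B) P] [FaithfulSMul (A × B) P]
    (hP : IsPGroup p P) (hA : Nat.Coprime (Nat.card A) p) (hB : IsPGroup p B)
    (htriv : ∀ x : P, (∀ b : B, ((1 : A), b) • x = x) → ∀ a : A, (a, (1 : B)) • x = x) :
    ∀ a : A, a = 1 := by
  intro a
  have h := auxABC hp hA hB (Nat.card P) P le_rfl hP htriv a
  have h2 : ((a, (1 : B)) : A × B) = 1 := by
    apply eq_of_smul_eq_smul (α := P)
    intro x
    rw [h x, one_smul]
  exact congrArg Prod.fst h2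
end

section
/- Let A be a finite group of automorphisms of a finite abelian group P with gcd(|A|, |P|) = 1. Then P decomposes as the internal direct product P = C_P(A) × [P, A], where C_P(A) is the subgroup of fixed points and [P, A] is the subgroup generated by elements x⁻¹·(a·x) for x ∈ P, a ∈ A. -/
theorem stmt_10 (P : Type*) [CommGroup P] [Fintype P] (A : Subgroup (MulAut P))
    (hco : Nat.Coprime (Nat.card A) (Nat.card P)) :
    IsCompl (FixedPoints.subgroup A P)
      (Subgroup.closure {y : P | ∃ x : P, ∃ a ∈ A, y = x⁻¹ * a x}) := by
  classical
  haveI : Fintype A := Fintype.ofFinite A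
  set S : Set P := {y : P | ∃ x : P, ∃ a ∈ A, y = x⁻¹ * a x} with hS
  set K := Subgroup.closure S with hK
  set n : ℕ := Nat.card A with hn
  -- the norm map
  let Nm : P →* P :=
    { toFun := fun x => ∏ a : A, (a : MulAut P) x
      map_one' := by simp
      map_mul' := by
        intro x y
        simp [map_mul, Finset.prod_mul_distrib] }
  have hNmdef : ∀ x : P, Nm x = ∏ a : A, (a : MulAut P) x := fun _ => rfl
  -- Nm x is a fixed point
  have hNmfix : ∀ x : P, Nm x ∈ FixedPoints.subgroup A P := by
    intro x
    rw [FixedPoints.mem_subgroup]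
    intro b
    have hb : ∀ y : P, b • y = (b : MulAut P) y := fun y => rfl
    rw [hNmdef, hb, map_prod]
    exact Fintype.prod_equiv (Equiv.mulLeft b) _ _ (fun a => rfl)
  -- Nm is invariant under precomposition with a ∈ A
  have hNminv : ∀ (a : A) (x : P), Nm ((a : MulAut P) x) = Nm x := by
    intro a x
    rw [hNmdef, hNmdef]
    exact Fintype.prod_equiv (Equiv.mulRight a) (fun b => (b : MulAut P) ((a : MulAut P) x))
      (fun b => (b : MulAut P) x) (fun b => rfl)
  -- K is in the kernel of Nm
  have hKker : K ≤ Nm.ker := by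
    rw [hK, Subgroup.closure_le]
    rintro y ⟨x, a, ha, rfl⟩
    have := hNminv ⟨a, ha⟩ x
    simp only [MonoidHom.coe_range, SetLike.mem_coe, MonoidHom.mem_ker, map_mul, map_inv]
    rw [this]
    simp
  -- Nm x = x ^ n * c x with c x ∈ K
  have hNmsplit : ∀ x : P, ∃ c ∈ K, Nm x = x ^ n * c := by
    intro x
    refine ⟨∏ a : A, (x⁻¹ * (a : MulAut P) x), ?_, ?_⟩
    · exact Subgroup.prod_mem _ fun a _ =>
        Subgroup.subset_closure ⟨x, a, a.2, rfl⟩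
    · rw [hNmdef]
      calc ∏ a : A, (a : MulAut P) x = ∏ a : A, x * (x⁻¹ * (a : MulAut P) x) := by
            refine Finset.prod_congr rfl fun a _ => ?_
            rw [mul_inv_cancel_left]
        _ = (∏ _a : A, x) * ∏ a : A, (x⁻¹ * (a : MulAut P) x) := Finset.prod_mul_distrib
        _ = x ^ n * ∏ a : A, (x⁻¹ * (a : MulAut P) x) := by
            rw [Finset.prod_const, Finset.card_univ, ← Nat.card_eq_fintype_card]
  -- Bezout
  obtain ⟨a, b, hab⟩ : ∃ a b : ℤ, (n : ℤ) * a + (Nat.card P : ℤ) * b = 1 := by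
    refine ⟨Nat.gcdA n (Nat.card P), Nat.gcdB n (Nat.card P), ?_⟩
    rw [← Nat.gcd_eq_gcd_ab]
    exact_mod_cast hco
  have hxcard : ∀ x : P, x ^ ((Nat.card P : ℤ)) = 1 := by
    intro x; rw [zpow_natCast]; exact pow_card_eq_one'
  constructor
  · -- disjoint
    rw [disjoint_iff, eq_bot_iff]
    rintro x ⟨hxH, hxK⟩
    have h1 : Nm x = 1 := hKker hxK
    have h2 : Nm x = x ^ n := by
      have hfix : ∀ c : A, (c : MulAut P) x = x := fun c => hxH c
      rw [hNmdef]
      simp only [hfix]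
      rw [Finset.prod_const, Finset.card_univ, ← Nat.card_eq_fintype_card]
    have hxn : x ^ n = 1 := by rw [← h2, h1]
    have hd : orderOf x ∣ Nat.gcd n (Nat.card P) :=
      Nat.dvd_gcd (orderOf_dvd_of_pow_eq_one hxn)
        (orderOf_dvd_of_pow_eq_one pow_card_eq_one')
    have hd1 : orderOf x ∣ 1 := by rw [← hco.gcd_eq_one]; exact hd
    simpa [Subgroup.mem_bot] using orderOf_eq_one_iff.mp (Nat.dvd_one.mp hd1)
  · -- codisjoint
    rw [codisjoint_iff, eq_top_iff]
    intro x _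
    obtain ⟨c, hcK, hsplit⟩ := hNmsplit x
    have hx : x = (Nm x) ^ a * c ^ (-a) := by
      rw [hsplit, mul_zpow, mul_assoc, ← zpow_add, add_neg_cancel, zpow_zero, mul_one,
        ← zpow_natCast x n, ← zpow_mul]
      have : (n : ℤ) * a = 1 - (Nat.card P : ℤ) * b := by linarith
      rw [this, zpow_sub, zpow_mul, hxcard, one_zpow, zpow_one]
      simp
    rw [hx]
    exact Subgroup.mul_mem _
      (Subgroup.mem_sup_left (Subgroup.zpow_mem _ (hNmfix x) a))
      (Subgroup.mem_sup_right (Subgroup.zpow_mem _ hcK (-a)))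
end

section
/- Let A be a finite group acting by automorphisms on a finite group G, and let N be a normal A-invariant subgroup of G with gcd(|A|, |N|) = 1. Assume A is solvable or N is solvable. Then the fixed points of A on G/N are the image of the fixed points of A on G: C_{G/N}(A) = C_G(A)N/N. -/
open scoped Pointwise

section QAct

variable {A : Type*} [Group A] {G : Type*} [Group G] [MulDistribMulAction A G]

theorem subSmul_eq (B : Subgroup A) (b : ↥B) (x : G) : b • x = (↑b : A) • x := rfl

def qSmul (M : Subgroup G) [M.Normal] (hM : ∀ a : A, ∀ m ∈ M, a • m ∈ M)
    (a : A) (q : G ⧸ M) : G ⧸ M :=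
  Quotient.map' (a • ·) (by
    intro g h hgh
    rw [QuotientGroup.leftRel_apply] at *
    have : a • (g⁻¹ * h) ∈ M := hM a _ hgh
    rwa [smul_mul', smul_inv'] at this) q

theorem qSmul_mk (M : Subgroup G) [M.Normal] (hM : ∀ a : A, ∀ m ∈ M, a • m ∈ M) (a : A) (g : G) :
    qSmul M hM a (g : G ⧸ M) = ((a • g : G) : G ⧸ M) := rfl

/-- Quotient action of `A` on `G ⧸ M` for an `A`-invariant normal subgroup `M`. -/
def qAct (M : Subgroup G) [M.Normal] (hM : ∀ a : A, ∀ m ∈ M, a • m ∈ M) :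
    MulDistribMulAction A (G ⧸ M) where
  smul := qSmul M hM
  one_smul q := Quotient.inductionOn' q (fun g => congrArg (QuotientGroup.mk) (one_smul A g))
  mul_smul a b q := Quotient.inductionOn' q (fun g => congrArg (QuotientGroup.mk) (mul_smul a b g))
  smul_mul a q r := Quotient.inductionOn₂' q r
    (fun g h => congrArg (QuotientGroup.mk) (smul_mul' a g h))
  smul_one a := congrArg (QuotientGroup.mk) (smul_one a)

theorem qfSmul_mem (B : Subgroup A) [hB : B.Normal] (a : A)
    (h : ↥(FixedPoints.subgroup B G)) : a • (h : G) ∈ FixedPoints.subgroup B G := by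
  intro b
  have hc : a⁻¹ * ↑b * a ∈ B := by simpa using hB.conj_mem _ b.2 a⁻¹
  have h2 : (a⁻¹ * ↑b * a) • (h : G) = (h : G) := h.2 ⟨_, hc⟩
  rw [subSmul_eq, ← mul_smul]
  have e : (↑b : A) * a = a * (a⁻¹ * ↑b * a) := by group
  rw [e, mul_smul, h2]

def qfSmul (B : Subgroup A) [hB : B.Normal] (q : A ⧸ B)
    (h : ↥(FixedPoints.subgroup B G)) : ↥(FixedPoints.subgroup B G) :=
  Quotient.liftOn' q (fun a => (⟨a • (h : G), qfSmul_mem B a h⟩ : ↥(FixedPoints.subgroup B G)))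
    (by
      intro a a' haa'
      rw [QuotientGroup.leftRel_apply] at haa'
      apply Subtype.ext
      show a • (h : G) = a' • (h : G)
      have h2 : (a⁻¹ * a') • (h : G) = (h : G) := h.2 ⟨_, haa'⟩
      have e : a' = a * (a⁻¹ * a') := by group
      rw [e, mul_smul, h2])

theorem qfSmul_mk (B : Subgroup A) [B.Normal] (a : A) (h : ↥(FixedPoints.subgroup B G)) :
    qfSmul B (QuotientGroup.mk a) h = ⟨a • (h : G), qfSmul_mem B a h⟩ := rfl

/-- Action of `A ⧸ B` on the `B`-fixed points. -/
def qfAct (B : Subgroup A) [hB : B.Normal] :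
    MulDistribMulAction (A ⧸ B) ↥(FixedPoints.subgroup B G) where
  smul := qfSmul B
  one_smul h := Subtype.ext (one_smul A (h : G))
  mul_smul q r h := Quotient.inductionOn₂' q r
    (fun a b => Subtype.ext (mul_smul a b (h : G)))
  smul_mul q h₁ h₂ := Quotient.inductionOn' q
    (fun a => Subtype.ext (smul_mul' a (h₁ : G) (h₂ : G)))
  smul_one q := Quotient.inductionOn' q (fun a => Subtype.ext (smul_one a))

end QAct

theorem abel_case {A : Type*} [Group A] [Finite A] {G : Type*} [Group G] [Finite G]
    [MulDistribMulAction A G] (N : Subgroup G)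
    (hcomm : ∀ g ∈ N, ∀ h ∈ N, g * h = h * g)
    (hinv : ∀ a : A, ∀ n ∈ N, a • n ∈ N)
    (hco : Nat.Coprime (Nat.card A) (Nat.card N))
    (x : G) (hx : ∀ a : A, x⁻¹ * (a • x) ∈ N) :
    ∃ y : G, (∀ a : A, a • y = y) ∧ x⁻¹ * y ∈ N := by
  letI : Fintype A := Fintype.ofFinite A
  letI cg : CommGroup ↥N :=
    { (inferInstance : Group ↥N) with
      mul_comm := fun g h => Subtype.ext (hcomm _ g.2 _ h.2) }
  set f : A → ↥N := fun a => ⟨x⁻¹ * (a • x), hx a⟩ with hf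
  have hmem : ∀ (b : A) (n : ↥N), b • (n : G) ∈ N := fun b n => hinv b _ n.2
  let sm : A → ↥N →* ↥N := fun b =>
    { toFun := fun n => ⟨b • (n : G), hmem b n⟩
      map_one' := Subtype.ext (smul_one b)
      map_mul' := fun m n => Subtype.ext (smul_mul' b (m : G) (n : G)) }
  have key : ∀ b a, sm b (f a) = (f b)⁻¹ * f (b * a) := by
    intro b a
    apply Subtype.ext
    show b • (x⁻¹ * (a • x)) = ((f b)⁻¹ * f (b * a) : ↥N)
    push_cast [hf]
    rw [smul_mul', smul_inv', mul_inv_rev, ← mul_smul]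
    group
  set m := Nat.card A with hm
  set c : ↥N := ∏ a : A, f a with hc
  have hcform : ∀ b, sm b c = ((f b)⁻¹) ^ m * c := by
    intro b
    rw [hc, map_prod]
    have : ∀ a : A, sm b (f a) = (f b)⁻¹ * f (b * a) := key b
    rw [Finset.prod_congr rfl (fun a _ => this a), Finset.prod_mul_distrib,
      Finset.prod_const, Finset.card_univ, ← Nat.card_eq_fintype_card, ← hm]
    congr 1
    exact Fintype.prod_equiv (Equiv.mulLeft b) _ _ (fun a => rfl)
  have hcop : (Nat.card ↥N).Coprime m := hco.symm
  set d : ↥N := (powCoprime hcop).symm c with hd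
  have hdm : d ^ m = c := (powCoprime hcop).apply_symm_apply c
  have hbd : ∀ b, sm b d = (f b)⁻¹ * d := by
    intro b
    apply (powCoprime hcop).injective
    show (sm b d) ^ m = ((f b)⁻¹ * d) ^ m
    rw [← map_pow, hdm, hcform b, mul_pow, hdm]
  refine ⟨x * (d : G), ?_, by simpa using d.2⟩
  intro a
  have h1 : a • x = x * (f a : G) := by
    simp [hf, mul_assoc]
  have h2 : a • (d : G) = ((f a : G))⁻¹ * (d : G) := by
    have := congrArg (Subtype.val) (hbd a)
    push_cast at this
    exact this
  rw [smul_mul', h1, h2]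
  group

theorem prime_case {A : Type*} [Group A] [Finite A] {G : Type*} [Group G] [Finite G]
    [MulDistribMulAction A G] (N : Subgroup G)
    (hinv : ∀ a : A, ∀ n ∈ N, a • n ∈ N)
    (hco : Nat.Coprime (Nat.card A) (Nat.card N))
    {p : ℕ} (hp : p.Prime) (hcard : Nat.card A = p)
    (x : G) (hx : ∀ a : A, x⁻¹ * (a • x) ∈ N) :
    ∃ y : G, (∀ a : A, a • y = y) ∧ x⁻¹ * y ∈ N := by
  haveI : Fact p.Prime := ⟨hp⟩
  have hmem : ∀ (a : A) (g : G), x⁻¹ * g ∈ N → x⁻¹ * (a • g) ∈ N := by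
    intro a g hg
    have e : x⁻¹ * (a • g) = (x⁻¹ * (a • x)) * (a • (x⁻¹ * g)) := by
      rw [smul_mul', smul_inv', ← mul_assoc]
      group
    rw [e]
    exact N.mul_mem (hx a) (hinv a _ hg)
  letI act : MulAction A {g : G // x⁻¹ * g ∈ N} :=
    { smul := fun a g => ⟨a • g.1, hmem a g.1 g.2⟩
      one_smul := fun g => Subtype.ext (one_smul A g.1)
      mul_smul := fun a b g => Subtype.ext (mul_smul a b g.1) }
  have hpg : IsPGroup p A := IsPGroup.of_card (n := 1) (by simpa using hcard)
  have hcardΩ : Nat.card {g : G // x⁻¹ * g ∈ N} = Nat.card N := by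
    apply Nat.card_congr
    exact ⟨fun g => ⟨x⁻¹ * g.1, g.2⟩, fun n => ⟨x * n.1, by simpa using n.2⟩,
      fun g => by simp, fun n => by simp⟩
  have hnd : ¬ p ∣ Nat.card {g : G // x⁻¹ * g ∈ N} := by
    rw [hcardΩ]
    intro hdvd
    have h1 : p ∣ Nat.gcd (Nat.card A) (Nat.card N) :=
      Nat.dvd_gcd (hcard ▸ dvd_refl p) hdvd
    rw [hco] at h1
    exact hp.one_lt.ne' (Nat.eq_one_of_dvd_one h1)
  obtain ⟨ω, hω⟩ := hpg.nonempty_fixed_point_of_prime_not_dvd_card _ hnd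
  rw [MulAction.mem_fixedPoints] at hω
  exact ⟨ω.1, fun a => congrArg Subtype.val (hω a), ω.2⟩

theorem exists_B {A : Type*} [Group A] [Finite A] (hsA : IsSolvable A)
    (h1 : Nat.card A ≠ 1) (h2 : ¬ (Nat.card A).Prime) :
    ∃ B : Subgroup A, B.Normal ∧ 1 < Nat.card B ∧ Nat.card B < Nat.card A := by
  have hpos : 0 < Nat.card A := Nat.card_pos
  by_cases hab : ∀ a b : A, a * b = b * a
  · letI : Fintype A := Fintype.ofFinite A
    set p := (Nat.card A).minFac with hpdef
    have hp : p.Prime := Nat.minFac_prime h1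
    haveI : Fact p.Prime := ⟨hp⟩
    have hdvd : p ∣ Fintype.card A := by
      rw [← Nat.card_eq_fintype_card]; exact Nat.minFac_dvd _
    obtain ⟨g, hg⟩ := exists_prime_orderOf_dvd_card p hdvd
    refine ⟨Subgroup.zpowers g, ⟨fun m hm a => ?_⟩, ?_, ?_⟩
    · have : a * m * a⁻¹ = m := by rw [hab a m, mul_assoc, mul_inv_cancel, mul_one]
      rwa [this]
    · rw [Nat.card_zpowers, hg]; exact hp.one_lt
    · rw [Nat.card_zpowers, hg]
      refine lt_of_le_of_ne (Nat.le_of_dvd hpos (Nat.minFac_dvd _)) ?_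
      intro he; exact h2 (he ▸ hp)
  · refine ⟨commutator A, inferInstance, ?_, ?_⟩
    · rw [Subgroup.one_lt_card_iff_ne_bot]
      intro hbot
      rw [commutator, Subgroup.commutator_eq_bot_iff_le_centralizer] at hbot
      refine hab (fun a b => ?_)
      have := hbot (Subgroup.mem_top b)
      rw [Subgroup.mem_centralizer_iff] at this
      exact this a (by simp)
    · have hne : commutator A ≠ ⊤ := by
        intro htop
        have hall : ∀ n, derivedSeries A n = ⊤ := by
          intro n
          induction n with
          | zero => rfl
          | succ k ihk => rw [derivedSeries_succ, ihk]; exact htop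
        obtain ⟨n, hn⟩ := hsA.solvable
        have : (⊤ : Subgroup A) = ⊥ := (hall n) ▸ hn
        have hone : ∀ a : A, a = 1 := by
          intro a
          have hmem : a ∈ (⊥ : Subgroup A) := this ▸ Subgroup.mem_top a
          simpa using hmem
        exact hab (fun a b => by rw [hone a, hone b])
      refine lt_of_le_of_ne (Nat.le_of_dvd hpos (Subgroup.card_subgroup_dvd_card _)) ?_
      intro he
      exact hne ((commutator A).eq_top_of_card_eq he)
universe u v

theorem solvA : ∀ (n : ℕ) (A : Type u) (G : Type v) [Group A] [Group G] [Finite A] [Finite G]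
    [MulDistribMulAction A G], Nat.card A ≤ n → IsSolvable A →
    ∀ (N : Subgroup G), N.Normal → (∀ a : A, ∀ m ∈ N, a • m ∈ N) →
    Nat.Coprime (Nat.card A) (Nat.card N) →
    ∀ x : G, (∀ a : A, x⁻¹ * (a • x) ∈ N) →
    ∃ y : G, (∀ a : A, a • y = y) ∧ x⁻¹ * y ∈ N := by
  intro n
  induction n with
  | zero =>
    intro A G _ _ _ _ _ hle
    exact absurd (Nat.card_pos (α := A)) (by omega)
  | succ n ih =>
    intro A G _ _ _ _ _ hle hsA N hN hinv hco x hx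
    haveI : Group.IsSolvable A := hsA
    haveI := hN
    by_cases h1 : Nat.card A = 1
    · refine ⟨x, fun a => ?_, by simpa using N.one_mem⟩
      haveI : Subsingleton A := (Nat.card_eq_one_iff_unique.mp h1).1
      rw [Subsingleton.elim a 1, one_smul]
    · by_cases hp : (Nat.card A).Prime
      · exact prime_case N hinv hco hp rfl x hx
      · obtain ⟨B, hBn, hB1, hBlt⟩ := exists_B hsA h1 hp
        haveI := hBn
        have hinvB : ∀ b : ↥B, ∀ m ∈ N, b • m ∈ N := fun b m hm => hinv (↑b) m hm
        have hcoB : Nat.Coprime (Nat.card ↥B) (Nat.card N) :=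
          Nat.Coprime.coprime_dvd_left (Subgroup.card_subgroup_dvd_card B) hco
        obtain ⟨y₀, hy₀fix, hy₀N⟩ := ih ↥B G (by omega) (inferInstance : Group.IsSolvable ↥B) N hN hinvB hcoB x
          (fun b => hx (↑b))
        have hy₀H : y₀ ∈ FixedPoints.subgroup B G := fun b => hy₀fix b
        letI qf := qfAct (G := G) B
        have hinv' : ∀ q : A ⧸ B, ∀ m ∈ N.subgroupOf (FixedPoints.subgroup B G),
            q • m ∈ N.subgroupOf (FixedPoints.subgroup B G) := by
          intro q
          refine Quotient.inductionOn' q ?_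
          intro a m hm
          show qfSmul B (Quotient.mk'' a) m ∈ _
          rw [Subgroup.mem_subgroupOf] at hm ⊢
          exact hinv a _ hm
        have hcard' : Nat.card (N.subgroupOf (FixedPoints.subgroup B G)) =
            Nat.card ↥(N ⊓ FixedPoints.subgroup B G) := by
          have e1 : N.subgroupOf (FixedPoints.subgroup B G) =
              (N ⊓ FixedPoints.subgroup B G).subgroupOf (FixedPoints.subgroup B G) := by
            ext m
            simp [Subgroup.mem_subgroupOf, m.2]
          rw [e1]
          exact Nat.card_congr (Subgroup.subgroupOfEquivOfLe inf_le_right).toEquiv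
        have hco' : Nat.Coprime (Nat.card (A ⧸ B))
            (Nat.card (N.subgroupOf (FixedPoints.subgroup B G))) := by
          refine Nat.Coprime.coprime_dvd_left (Subgroup.card_quotient_dvd_card B) ?_
          refine Nat.Coprime.coprime_dvd_right ?_ hco
          rw [hcard']
          exact Subgroup.card_dvd_of_le inf_le_left
        have hx' : ∀ q : A ⧸ B,
            (⟨y₀, hy₀H⟩ : ↥(FixedPoints.subgroup B G))⁻¹ * (q • ⟨y₀, hy₀H⟩) ∈
              N.subgroupOf (FixedPoints.subgroup B G) := by
          intro q
          refine Quotient.inductionOn' q ?_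
          intro a
          show (⟨y₀, hy₀H⟩ : ↥(FixedPoints.subgroup B G))⁻¹ *
            (qfSmul B (Quotient.mk'' a) ⟨y₀, hy₀H⟩) ∈ _
          rw [Subgroup.mem_subgroupOf]
          show y₀⁻¹ * (a • y₀) ∈ N
          have e : y₀⁻¹ * (a • y₀) =
              (x⁻¹ * y₀)⁻¹ * ((x⁻¹ * (a • x)) * (a • (x⁻¹ * y₀))) := by
            rw [smul_mul', smul_inv']
            group
          rw [e]
          exact N.mul_mem (N.inv_mem hy₀N) (N.mul_mem (hx a) (hinv a _ hy₀N))
        have hqle : Nat.card (A ⧸ B) ≤ n := by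
          have hmul : Nat.card A = Nat.card (A ⧸ B) * Nat.card B :=
            Subgroup.card_eq_card_quotient_mul_card_subgroup B
          have h2q : Nat.card (A ⧸ B) * 2 ≤ Nat.card A := by
            rw [hmul]
            exact Nat.mul_le_mul_left _ hB1
          have hqpos : 0 < Nat.card (A ⧸ B) := Nat.card_pos
          omega
        obtain ⟨z, hzfix, hzN'⟩ :=
          ih (A ⧸ B) ↥(FixedPoints.subgroup B G) hqle (inferInstance : Group.IsSolvable (A ⧸ B))
            (N.subgroupOf (FixedPoints.subgroup B G)) inferInstance hinv' hco'
            ⟨y₀, hy₀H⟩ hx'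
        refine ⟨(z : G), ?_, ?_⟩
        · intro a
          exact congrArg Subtype.val (hzfix (Quotient.mk'' a))
        · have hz2 : y₀⁻¹ * (z : G) ∈ N := by
            have h := hzN'
            rw [Subgroup.mem_subgroupOf] at h
            exact h
          have e : x⁻¹ * (z : G) = (x⁻¹ * y₀) * (y₀⁻¹ * (z : G)) := by group
          rw [e]
          exact N.mul_mem hy₀N hz2

theorem solvN {A : Type u} [Group A] [Finite A] :
    ∀ (n : ℕ) (G : Type v) [Group G] [Finite G] [MulDistribMulAction A G]
    (N : Subgroup G), N.Normal → Nat.card N ≤ n →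
    (∀ a : A, ∀ m ∈ N, a • m ∈ N) →
    Nat.Coprime (Nat.card A) (Nat.card N) → IsSolvable ↥N →
    ∀ x : G, (∀ a : A, x⁻¹ * (a • x) ∈ N) →
    ∃ y : G, (∀ a : A, a • y = y) ∧ x⁻¹ * y ∈ N := by
  intro n
  induction n with
  | zero =>
    intro G _ _ _ N _ hle
    exact absurd (Nat.card_pos (α := ↥N)) (by omega)
  | succ n ih =>
    intro G _ _ _ N hN hle hinv hco hsolvN x hx
    haveI := hN
    haveI : Group.IsSolvable ↥N := hsolvN
    by_cases hcomm : ∀ g ∈ N, ∀ h ∈ N, g * h = h * g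
    · exact abel_case N hcomm hinv hco x hx
    · -- M = [N,N]
      haveI hMn : (⁅N, N⁆ : Subgroup G).Normal := Subgroup.commutator_normal N N
      have hMle : (⁅N, N⁆ : Subgroup G) ≤ N := Subgroup.commutator_le_left N N
      have hMbot : (⁅N, N⁆ : Subgroup G) ≠ ⊥ := by
        intro hbot
        rw [Subgroup.commutator_eq_bot_iff_le_centralizer] at hbot
        refine hcomm (fun g hg h hh => ?_)
        have := hbot hg
        rw [Subgroup.mem_centralizer_iff] at this
        exact (this h hh).symm
      have hMmap : (⁅N, N⁆ : Subgroup G) = Subgroup.map N.subtype (commutator ↥N) := by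
        rw [commutator, Subgroup.map_commutator]
        congr 1 <;> rw [← MonoidHom.range_eq_map, Subgroup.range_subtype]
      have hMN : (⁅N, N⁆ : Subgroup G) ≠ N := by
        intro heq
        have htop : commutator ↥N = ⊤ := by
          apply Subgroup.map_injective (Subgroup.subtype_injective N)
          rw [← hMmap, heq, ← MonoidHom.range_eq_map, Subgroup.range_subtype]
        have hall : ∀ k, derivedSeries ↥N k = ⊤ := by
          intro k
          induction k with
          | zero => rfl
          | succ k ihk => rw [derivedSeries_succ, ihk]; exact htop
        obtain ⟨k, hk⟩ := hsolvN.solvable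
        have hTB : (⊤ : Subgroup ↥N) = ⊥ := (hall k) ▸ hk
        refine hcomm (fun g hg h hh => ?_)
        have h1 : (⟨g, hg⟩ : ↥N) = 1 := by
          have hm : (⟨g, hg⟩ : ↥N) ∈ (⊥ : Subgroup ↥N) := hTB ▸ Subgroup.mem_top _
          simpa using hm
        have h2 : (⟨h, hh⟩ : ↥N) = 1 := by
          have hm : (⟨h, hh⟩ : ↥N) ∈ (⊥ : Subgroup ↥N) := hTB ▸ Subgroup.mem_top _
          simpa using hm
        have hg1 : g = 1 := congrArg Subtype.val h1
        have hh1 : h = 1 := congrArg Subtype.val h2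
        rw [hg1, hh1]
      -- invariance of M
      have hNsmul : ∀ a : A,
          Subgroup.map (MulDistribMulAction.toMonoidHom G a) N = N := by
        intro a
        ext g
        rw [Subgroup.mem_map]
        constructor
        · rintro ⟨m, hm, rfl⟩
          exact hinv a m hm
        · intro hg
          exact ⟨a⁻¹ • g, hinv a⁻¹ g hg, by show a • a⁻¹ • g = g; rw [← mul_smul]; simp⟩
      have hMinv : ∀ a : A, ∀ m ∈ (⁅N, N⁆ : Subgroup G), a • m ∈ (⁅N, N⁆ : Subgroup G) := by
        intro a m hm
        have : Subgroup.map (MulDistribMulAction.toMonoidHom G a) ⁅N, N⁆ = ⁅N, N⁆ := by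
          rw [Subgroup.map_commutator, hNsmul a]
        rw [← this]
        exact Subgroup.mem_map_of_mem _ hm
      letI qa := qAct (⁅N, N⁆ : Subgroup G) hMinv
      -- image of N in the quotient
      have hinv1 : ∀ a : A, ∀ q ∈ Subgroup.map (QuotientGroup.mk' ⁅N, N⁆) N,
          a • q ∈ Subgroup.map (QuotientGroup.mk' ⁅N, N⁆) N := by
        intro a q hq
        rw [Subgroup.mem_map] at hq ⊢
        obtain ⟨g, hg, rfl⟩ := hq
        exact ⟨a • g, hinv a g hg, rfl⟩
      -- cardinality bookkeeping via the restricted projection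
      have hrange : ((QuotientGroup.mk' ⁅N, N⁆).comp N.subtype).range =
          Subgroup.map (QuotientGroup.mk' ⁅N, N⁆) N := by
        rw [MonoidHom.range_comp, Subgroup.range_subtype]
      have hker : ((QuotientGroup.mk' ⁅N, N⁆).comp N.subtype).ker =
          (⁅N, N⁆ : Subgroup G).subgroupOf N := by
        rw [← MonoidHom.comap_ker, QuotientGroup.ker_mk']
        rfl
      have hcardker : Nat.card ((QuotientGroup.mk' ⁅N, N⁆).comp N.subtype).ker =
          Nat.card (⁅N, N⁆ : Subgroup G) := by
        rw [hker]
        exact Nat.card_congr (Subgroup.subgroupOfEquivOfLe hMle).toEquiv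
      have hcardrange : Nat.card (Subgroup.map (QuotientGroup.mk' ⁅N, N⁆) N) *
          Nat.card (⁅N, N⁆ : Subgroup G) = Nat.card N := by
        rw [← hrange, ← hcardker]
        have e := (QuotientGroup.quotientKerEquivRange
          ((QuotientGroup.mk' ⁅N, N⁆).comp N.subtype)).toEquiv
        rw [← Nat.card_congr e]
        exact (Subgroup.card_eq_card_quotient_mul_card_subgroup _).symm
      have hM2 : 1 < Nat.card (⁅N, N⁆ : Subgroup G) :=
        (Subgroup.one_lt_card_iff_ne_bot _).mpr hMbot
      have hQpos : 0 < Nat.card (Subgroup.map (QuotientGroup.mk' ⁅N, N⁆) N) := Nat.card_pos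
      have hcard1 : Nat.card (Subgroup.map (QuotientGroup.mk' ⁅N, N⁆) N) ≤ n := by nlinarith
      have hco1 : Nat.Coprime (Nat.card A)
          (Nat.card (Subgroup.map (QuotientGroup.mk' ⁅N, N⁆) N)) :=
        Nat.Coprime.coprime_dvd_right ⟨Nat.card (⁅N, N⁆ : Subgroup G), hcardrange.symm⟩ hco
      have hsolv1 : IsSolvable ↥(Subgroup.map (QuotientGroup.mk' ⁅N, N⁆) N) := by
        rw [← hrange]
        exact solvable_of_surjective
          ((QuotientGroup.mk' ⁅N, N⁆).comp N.subtype).rangeRestrict_surjective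
      have hx1 : ∀ a : A, ((x : G ⧸ (⁅N, N⁆ : Subgroup G)))⁻¹ * (a • (x : G ⧸ ⁅N, N⁆)) ∈
          Subgroup.map (QuotientGroup.mk' ⁅N, N⁆) N := by
        intro a
        show ((x : G ⧸ (⁅N, N⁆ : Subgroup G)))⁻¹ * (qSmul ⁅N, N⁆ hMinv a (x : G ⧸ ⁅N, N⁆)) ∈ _
        rw [qSmul_mk]
        show ((x⁻¹ * (a • x) : G) : G ⧸ (⁅N, N⁆ : Subgroup G)) ∈ _
        exact Subgroup.mem_map_of_mem _ (hx a)
      obtain ⟨ybar, hyfix, hyN⟩ := ih (G ⧸ (⁅N, N⁆ : Subgroup G))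
        (Subgroup.map (QuotientGroup.mk' ⁅N, N⁆) N)
        (hN.map _ (QuotientGroup.mk'_surjective _)) hcard1 hinv1 hco1 hsolv1
        (x : G ⧸ ⁅N, N⁆) hx1
      obtain ⟨g, rfl⟩ := QuotientGroup.mk'_surjective (⁅N, N⁆ : Subgroup G) ybar
      -- translate the two facts about ybar
      have hgfix : ∀ a : A, g⁻¹ * (a • g) ∈ (⁅N, N⁆ : Subgroup G) := by
        intro a
        have h := hyfix a
        have h' : ((a • g : G) : G ⧸ (⁅N, N⁆ : Subgroup G)) = (g : G ⧸ ⁅N, N⁆) := h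
        rw [QuotientGroup.eq] at h'
        have := (⁅N, N⁆ : Subgroup G).inv_mem h'
        simpa using this
      have hxg : x⁻¹ * g ∈ N := by
        have h : ((x⁻¹ * g : G) : G ⧸ (⁅N, N⁆ : Subgroup G)) ∈
            Subgroup.map (QuotientGroup.mk' ⁅N, N⁆) N := by
          have := hyN
          simpa using this
        rw [Subgroup.mem_map] at h
        obtain ⟨nn, hnn, hnn2⟩ := h
        have : (nn : G ⧸ (⁅N, N⁆ : Subgroup G)) = ((x⁻¹ * g : G) : G ⧸ ⁅N, N⁆) := hnn2
        rw [QuotientGroup.eq] at this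
        have hmem : nn⁻¹ * (x⁻¹ * g) ∈ N := hMle this
        have e : x⁻¹ * g = nn * (nn⁻¹ * (x⁻¹ * g)) := by group
        rw [e]
        exact N.mul_mem hnn hmem
      -- second application: lift along M
      have hcardM : Nat.card (⁅N, N⁆ : Subgroup G) ≤ n := by
        have hQ2 : 1 < Nat.card (Subgroup.map (QuotientGroup.mk' ⁅N, N⁆) N) := by
          rw [Subgroup.one_lt_card_iff_ne_bot]
          intro hbot
          rw [Subgroup.map_eq_bot_iff, QuotientGroup.ker_mk'] at hbot
          exact hMN (le_antisymm hMle hbot)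
        nlinarith
      have hcoM : Nat.Coprime (Nat.card A) (Nat.card (⁅N, N⁆ : Subgroup G)) :=
        Nat.Coprime.coprime_dvd_right (Subgroup.card_dvd_of_le hMle) hco
      have hsolvM : IsSolvable ↥(⁅N, N⁆ : Subgroup G) := by
        have e := Subgroup.subgroupOfEquivOfLe hMle
        haveI : Group.IsSolvable ↥(⁅N, N⁆.subgroupOf N) := inferInstance
        exact solvable_of_surjective (f := e.toMonoidHom) e.surjective
      obtain ⟨y, hyfix2, hyM⟩ := ih G (⁅N, N⁆ : Subgroup G) hMn hcardM hMinv hcoM hsolvM g hgfix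
      refine ⟨y, hyfix2, ?_⟩
      have e : x⁻¹ * y = (x⁻¹ * g) * (g⁻¹ * y) := by group
      rw [e]
      exact N.mul_mem hxg (hMle hyM)

theorem stmt_11 (A G : Type*) [Group A] [Fintype A] [Group G] [Fintype G]
    [MulDistribMulAction A G] (N : Subgroup G) [N.Normal]
    (hinv : ∀ a : A, ∀ n ∈ N, a • n ∈ N)
    (hco : Nat.Coprime (Nat.card A) (Nat.card N))
    (hsolv : IsSolvable A ∨ IsSolvable N) :
    ∀ x : G, (∀ a : A, ((a • x : G) : G ⧸ N) = (x : G ⧸ N)) ↔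
      ∃ y : G, (∀ a : A, a • y = y) ∧ (y : G ⧸ N) = (x : G ⧸ N) := by
  intro x
  constructor
  · intro hx
    have hx' : ∀ a : A, x⁻¹ * (a • x) ∈ N := by
      intro a
      have h1 := (QuotientGroup.eq).mp (hx a)
      have h2 := N.inv_mem h1
      simpa using h2
    have key : ∃ y : G, (∀ a : A, a • y = y) ∧ x⁻¹ * y ∈ N := by
      rcases hsolv with hA | hNs
      · exact solvA (Nat.card A) A G le_rfl hA N inferInstance hinv hco x hx'
      · exact solvN (Nat.card N) G N inferInstance le_rfl hinv hco hNs x hx'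
    obtain ⟨y, h1, h2⟩ := key
    refine ⟨y, h1, ?_⟩
    rw [QuotientGroup.eq]
    simpa using N.inv_mem h2
  · rintro ⟨y, hyfix, hyN⟩
    intro a
    have hyx : y⁻¹ * x ∈ N := (QuotientGroup.eq).mp hyN
    rw [QuotientGroup.eq]
    have h2 : a • (y⁻¹ * x) ∈ N := hinv a _ hyx
    have e2 : (a • x)⁻¹ * x = (a • (y⁻¹ * x))⁻¹ * (y⁻¹ * x) := by
      rw [smul_mul', smul_inv', hyfix a]
      group
    rw [e2]
    exact N.mul_mem (N.inv_mem h2) hyx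
end

section
/- Let p be a prime and G a finite group satisfying condition R(p) with parameter α (i.e., for every a ∈ G the p-part of |G : C_G(a)| lies in {1, p^α}). Let N be a normal subgroup of G whose order is coprime to p. Then the quotient G/N either satisfies R(p) with the same parameter α, or every conjugacy class of G/N has size coprime to p. -/
lemma stmt_13_aux (G : Type*) [Group G] [Fintype G] (p : ℕ) (hp : p.Prime)
    (N : Subgroup G) [N.Normal] (hN : Nat.Coprime (Nat.card N) p) (x : G ⧸ N) :
    ∃ a : G, (Subgroup.centralizer ({x} : Set (G ⧸ N))).index.factorization p
      = (Subgroup.centralizer ({a} : Set G)).index.factorization p := by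
  haveI : Fact p.Prime := ⟨hp⟩
  set π := QuotientGroup.mk' N with hπ
  set D := Subgroup.centralizer ({x} : Set (G ⧸ N)) with hD
  set H := D.comap π with hH
  -- the fiber of x
  let S := {g : G // π g = x}
  -- H acts on S by conjugation
  letI : SMul H S := ⟨fun h g => ⟨h.1 * g.1 * h.1⁻¹, by
    have hcom : π h.1 * x = x * π h.1 :=
      Subgroup.mem_centralizer_singleton_iff.mp h.2
    have h2 : π (h.1 * g.1 * h.1⁻¹) = π h.1 * x * (π h.1)⁻¹ := by
      simp [map_mul, g.2]
    rw [h2, hcom, mul_assoc, mul_inv_cancel, mul_one]⟩⟩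
  have smul_def : ∀ (h : H) (g : S), (h • g).1 = h.1 * g.1 * h.1⁻¹ := fun _ _ => rfl
  letI : MulAction H S :=
    { one_smul := fun g => Subtype.ext (by rw [smul_def]; simp)
      mul_smul := fun h₁ h₂ g => Subtype.ext (by
        rw [smul_def, smul_def, smul_def]
        simp [mul_assoc]) }
  -- cardinality of the fiber
  obtain ⟨a₀, ha₀⟩ := QuotientGroup.mk'_surjective N x
  rw [← hπ] at ha₀
  have hcardS : Nat.card S = Nat.card N := by
    refine Nat.card_congr (Equiv.symm ⟨fun n => ⟨a₀ * n.1, by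
        have h1 : π n.1 = 1 := (QuotientGroup.eq_one_iff _).2 n.2
        rw [map_mul, h1, mul_one, ha₀]⟩,
      fun g => ⟨a₀⁻¹ * g.1, by
        have h1 : π (a₀⁻¹ * g.1) = 1 := by
          rw [map_mul, map_inv, ha₀, g.2, inv_mul_cancel]
        exact (QuotientGroup.eq_one_iff _).1 h1⟩,
      fun n => by ext; simp, fun g => by ext; simp⟩)
  have hpS : ¬ p ∣ Nat.card S := by
    rw [hcardS]
    exact (Nat.Prime.coprime_iff_not_dvd hp).1 hN.symm
  -- a Sylow p-subgroup of H
  obtain ⟨P⟩ : Nonempty (Sylow p H) := inferInstance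
  obtain ⟨a, ha⟩ := P.isPGroup'.nonempty_fixed_point_of_prime_not_dvd_card S hpS
  refine ⟨a.1, ?_⟩
  set C := Subgroup.centralizer ({a.1} : Set G) with hC
  -- C ≤ H
  have hCH : C ≤ H := by
    intro g hg
    have hg' : g * a.1 = a.1 * g := Subgroup.mem_centralizer_singleton_iff.mp hg
    have : π g ∈ D := by
      refine Subgroup.mem_centralizer_singleton_iff.mpr ?_
      have := congrArg π hg'
      simpa [map_mul, a.2] using this
    exact this
  -- P ≤ C.subgroupOf H
  have hPC : (P : Subgroup H) ≤ C.subgroupOf H := by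
    intro s hs
    have hfix : (⟨s, hs⟩ : (P : Subgroup H)) • a = a := ha ⟨s, hs⟩
    have hfix2 : s • a = a := hfix
    have hval : s.1 * a.1 * s.1⁻¹ = a.1 := by
      rw [← smul_def s a, hfix2]
    refine Subgroup.mem_subgroupOf.mpr (Subgroup.mem_centralizer_singleton_iff.mpr ?_)
    calc s.1 * a.1 = (s.1 * a.1 * s.1⁻¹) * s.1 := by group
    _ = a.1 * s.1 := by rw [hval]
  -- index computation
  have hrel : ¬ p ∣ C.relIndex H := by
    intro hpdvd
    exact P.not_dvd_index (hpdvd.trans (Subgroup.index_dvd_of_le hPC))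
  have hmul : C.relIndex H * H.index = C.index := Subgroup.relIndex_mul_index hCH
  have hHD : H.index = D.index :=
    Subgroup.index_comap_of_surjective D (QuotientGroup.mk'_surjective N)
  have h0 : C.relIndex H ≠ 0 := Subgroup.index_ne_zero_of_finite
  have h1 : H.index ≠ 0 := Subgroup.index_ne_zero_of_finite
  calc D.index.factorization p = H.index.factorization p := by rw [hHD]
  _ = (C.relIndex H * H.index).factorization p := by
      rw [Nat.factorization_mul h0 h1]
      simp [Nat.factorization_eq_zero_of_not_dvd hrel]
  _ = C.index.factorization p := by rw [hmul]

theorem stmt_13 (G : Type*) [Group G] [Fintype G] (p : ℕ) (hp : p.Prime)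
    (α : ℕ) (hα : 0 < α)
    (hR : ∀ a : G, pPart p (Subgroup.centralizer {a}).index ∈ ({1, p ^ α} : Set ℕ))
    (N : Subgroup G) [N.Normal] (hN : Nat.Coprime (Nat.card N) p) :
    (∀ x : G ⧸ N, pPart p (Subgroup.centralizer {x}).index ∈ ({1, p ^ α} : Set ℕ)) ∨
      (∀ x : G ⧸ N, Nat.Coprime (Subgroup.centralizer {x}).index p) := by
  left
  intro x
  obtain ⟨a, h⟩ := stmt_13_aux G p hp N hN x
  simpa [pPart, h] using hR a
end
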